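/- arXiv:2006.04353 — 9 statements merged into one kernel-verified Lean document; each statement's English description precedes it below -/
import Mathlib

section
/- Let (X_t)_{t∈ℕ} be as in the drift setting with deterministic initial value X_0 = x₀. Then for every t ≥ 0, E[e^{η X_t}] ≤ ρ^t e^{η x₀} + ((1 - ρ^t)/(1 - ρ)) e^{ν + η B}. -/
open MeasureTheory Real

section Aux
open Nat
open Real Nat

lemma exp_tail (x : ℝ) :
    Real.exp x = 1 + x + ∑' n : ℕ, x ^ (n + 2) / ((n + 2)! : ℝ) := by
  have hs : Summable (fun n : ℕ => x ^ n / (n ! : ℝ)) := Real.summable_pow_div_factorial x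
  have hs1 : Summable (fun n : ℕ => x ^ (n + 1) / ((n + 1)! : ℝ)) :=
    (summable_nat_add_iff 1).mpr hs
  have h0 : Real.exp x = ∑' n : ℕ, x ^ n / (n ! : ℝ) := by
    rw [Real.exp_eq_exp_ℝ, NormedSpace.exp_eq_tsum_div]
  rw [h0, Summable.tsum_eq_zero_add hs, Summable.tsum_eq_zero_add hs1]
  have : (fun n : ℕ => x ^ (n + 1 + 1) / ((n + 1 + 1)! : ℝ)) =
      fun n : ℕ => x ^ (n + 2) / ((n + 2)! : ℝ) := by
    funext n; norm_num [add_assoc]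
  rw [this]
  norm_num
  ring

set_option maxHeartbeats 1000000 in
lemma exp_quad {ν η d : ℝ} (hη0 : 0 ≤ η) (hη1 : η ≤ 1) (hd : |d| ≤ ν) :
    Real.exp (η * d) ≤ 1 + η * d + η ^ 2 * (Real.exp ν - ν - 1) := by
  have h1 := exp_tail (η * d)
  have h2 := exp_tail ν
  have hsum2 : Summable (fun n : ℕ => ν ^ (n + 2) / ((n + 2)! : ℝ)) :=
    (summable_nat_add_iff 2).mpr (Real.summable_pow_div_factorial ν)
  have hsum1 : Summable (fun n : ℕ => (η * d) ^ (n + 2) / ((n + 2)! : ℝ)) :=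
    (summable_nat_add_iff 2).mpr (Real.summable_pow_div_factorial (η * d))
  have key : ∑' n : ℕ, (η * d) ^ (n + 2) / ((n + 2)! : ℝ) ≤
      η ^ 2 * ∑' n : ℕ, ν ^ (n + 2) / ((n + 2)! : ℝ) := by
    rw [← tsum_mul_left]
    refine Summable.tsum_le_tsum ?_ hsum1 (hsum2.mul_left _)
    intro n
    have hfac : (0:ℝ) < ((n + 2)! : ℝ) := by positivity
    rw [mul_div_assoc']
    gcongr ?_ / _
    calc (η * d) ^ (n + 2) ≤ |(η * d) ^ (n + 2)| := le_abs_self _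
      _ = (η * |d|) ^ (n + 2) := by rw [abs_pow, abs_mul, abs_of_nonneg hη0]
      _ = η ^ (n + 2) * |d| ^ (n + 2) := mul_pow _ _ _
      _ ≤ η ^ 2 * ν ^ (n + 2) := by
          apply mul_le_mul _ (pow_le_pow_left₀ (abs_nonneg d) hd _) (by positivity) (by positivity)
          calc η ^ (n + 2) = η ^ 2 * η ^ n := by ring
            _ ≤ η ^ 2 * 1 :=
                mul_le_mul_of_nonneg_left (pow_le_one₀ hη0 hη1) (by positivity)
            _ = η ^ 2 := mul_one _
  have h2' : ∑' n : ℕ, ν ^ (n + 2) / ((n + 2)! : ℝ) = Real.exp ν - ν - 1 := by linarith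
  rw [h2'] at key
  linarith

end Aux

/-- Hajek-type drift bound on the exponential moment of a process with bounded
increments, negative drift above level `B`, and deterministic initial value. -/
theorem stmt_0
    {Ω : Type*} {m : MeasurableSpace Ω} {μ : Measure Ω} [IsProbabilityMeasure μ]
    (ℱ : Filtration ℕ m)
    (X : ℕ → Ω → ℝ) (hXadapted : Adapted ℱ X)
    (x₀ ν α B η ρ : ℝ)
    (hX0 : ∀ ω, X 0 ω = x₀)
    (hν : 0 < ν)
    (hinc : ∀ t : ℕ, ∀ᵐ ω ∂μ, |X (t + 1) ω - X t ω| ≤ ν)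
    (hα : 0 < α) (hB : 0 < B)
    (hdrift : ∀ t : ℕ, ∀ᵐ ω ∂μ,
      X t ω > B → (μ[fun ω' => X (t + 1) ω' - X t ω' | ℱ t]) ω ≤ -α)
    (hη0 : 0 < η) (hη1 : η ≤ min 1 (α / (2 * (Real.exp ν - ν - 1))))
    (hρ : ρ = 1 - η * α / 2) (hρ0 : 0 < ρ) (hρ1 : ρ < 1) :
    ∀ t : ℕ, ∫ ω, Real.exp (η * X t ω) ∂μ ≤
      ρ ^ t * Real.exp (η * x₀) + ((1 - ρ ^ t) / (1 - ρ)) * Real.exp (ν + η * B) := by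
  set c := Real.exp ν - ν - 1 with hc_def
  clear_value c
  have hc : 0 < c := by nlinarith [Real.add_one_lt_exp (ne_of_gt hν)]
  have hη1' : η ≤ 1 := hη1.trans (min_le_left _ _)
  have hηc : η * c ≤ α / 2 := by
    have h := hη1.trans (min_le_right _ _)
    rw [le_div_iff₀ (by positivity)] at h
    have h2 : η * (2 * c) = 2 * (η * c) := by ring
    linarith
  set K := Real.exp (ν + η * B) with hK_def
  clear_value K
  have hK : 0 < K := by rw [hK_def]; exact Real.exp_pos _
  have hXm : ∀ t, Measurable (X t) := fun t => (hXadapted t).mono (ℱ.le t) le_rfl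
  have hbd : ∀ t : ℕ, ∀ᵐ ω ∂μ, |X t ω| ≤ |x₀| + t * ν := by
    intro t; induction t with
    | zero =>
        filter_upwards with ω
        rw [hX0]; simp
    | succ t ih =>
        filter_upwards [ih, hinc t] with ω h1 h2
        have h3 : |X (t + 1) ω| - |X t ω| ≤ |X (t + 1) ω - X t ω| :=
          abs_sub_abs_le_abs_sub _ _
        push_cast
        nlinarith
  have hYint : ∀ t : ℕ, Integrable (fun ω => Real.exp (η * X t ω)) μ := by
    intro t
    refine Integrable.mono' (integrable_const (Real.exp (η * (|x₀| + t * ν))))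
      (Real.measurable_exp.comp ((hXm t).const_mul η)).aestronglyMeasurable ?_
    filter_upwards [hbd t] with ω h
    rw [Real.norm_eq_abs, abs_of_pos (Real.exp_pos _)]
    exact Real.exp_le_exp.mpr (mul_le_mul_of_nonneg_left ((le_abs_self _).trans h) hη0.le)
  have hrec : ∀ t : ℕ, ∫ ω, Real.exp (η * X (t + 1) ω) ∂μ ≤
      ρ * ∫ ω, Real.exp (η * X t ω) ∂μ + K := by
    intro t
    set Y := fun ω => Real.exp (η * X t ω) with hY_def
    set D := fun ω' => X (t + 1) ω' - X t ω' with hD_def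
    set A : Set Ω := {ω | B < X t ω} with hA_def
    have hAf : MeasurableSet[ℱ t] A :=
      measurableSet_lt measurable_const (hXadapted t)
    have hAm : MeasurableSet A := ℱ.le t _ hAf
    set Z := A.indicator Y with hZ_def
    have hZsm' : StronglyMeasurable[ℱ t] Z :=
      (Real.continuous_exp.comp_stronglyMeasurable
        ((hXadapted t).const_mul η).stronglyMeasurable).indicator hAf
    have hZm : Measurable Z := (hZsm'.mono (ℱ.le t)).measurable
    have hZnonneg : ∀ ω, 0 ≤ Z ω := fun ω =>
      Set.indicator_nonneg (fun ω' _ => (Real.exp_pos _).le) ω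
    have hZleY : ∀ ω, Z ω ≤ Y ω :=
      fun ω => Set.indicator_le_self' (fun ω' _ => (Real.exp_pos _).le) ω
    set M := Real.exp (η * (|x₀| + t * ν)) with hM_def
    clear_value M
    have hYbd : ∀ᵐ ω ∂μ, Y ω ≤ M := by
      filter_upwards [hbd t] with ω h
      rw [hM_def]
      exact Real.exp_le_exp.mpr (mul_le_mul_of_nonneg_left ((le_abs_self _).trans h) hη0.le)
    have hZbd : ∀ᵐ ω ∂μ, ‖Z ω‖ ≤ M := by
      filter_upwards [hYbd] with ω h
      rw [Real.norm_eq_abs, abs_of_nonneg (hZnonneg ω)]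
      exact (hZleY ω).trans h
    have hZint : Integrable Z μ :=
      Integrable.mono' (integrable_const M) hZm.aestronglyMeasurable hZbd
    have hDm : Measurable D := (hXm (t + 1)).sub (hXm t)
    have hDint : Integrable D μ := by
      refine Integrable.mono' (integrable_const ν) hDm.aestronglyMeasurable ?_
      filter_upwards [hinc t] with ω h
      rwa [Real.norm_eq_abs]
    have hZDint : Integrable (fun ω => Z ω * D ω) μ := by
      refine Integrable.mono' (integrable_const (M * ν))
        (hZm.mul hDm).aestronglyMeasurable ?_
      filter_upwards [hZbd, hinc t] with ω h1 h2
      rw [Real.norm_eq_abs, abs_mul]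
      have h1' : |Z ω| ≤ M := by rwa [Real.norm_eq_abs] at h1
      exact mul_le_mul h1' h2 (abs_nonneg _) ((abs_nonneg _).trans h1')
    set W := fun ω => if B < X t ω then (0 : ℝ) else K with hW_def
    have hWm : Measurable W := Measurable.ite hAm measurable_const measurable_const
    have hWbd : ∀ ω, ‖W ω‖ ≤ K := by
      intro ω
      rw [Real.norm_eq_abs, hW_def]
      by_cases h : B < X t ω <;> simp [h, abs_of_nonneg hK.le, hK.le]
    have hWint : Integrable W μ :=
      Integrable.mono' (integrable_const K) hWm.aestronglyMeasurable
        (Filter.Eventually.of_forall hWbd)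
    have hpt : ∀ᵐ ω ∂μ, Real.exp (η * X (t + 1) ω) ≤
        W ω + (1 + η ^ 2 * c) * Z ω + η * (Z ω * D ω) := by
      filter_upwards [hinc t] with ω hd
      have hY0 : 0 ≤ Y ω := (Real.exp_pos _).le
      by_cases h : B < X t ω
      · have hZω : Z ω = Y ω := Set.indicator_of_mem (show ω ∈ A from h) Y
        have hq : Real.exp (η * D ω) ≤ 1 + η * D ω + η ^ 2 * c := by
          rw [hc_def]
          exact exp_quad hη0.le hη1' hd
        have hsplit : Real.exp (η * X (t + 1) ω) = Y ω * Real.exp (η * D ω) := by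
          rw [hY_def, ← Real.exp_add]
          congr 1
          simp only [hD_def]
          ring
        rw [hsplit, hW_def]
        simp only [if_pos h]
        calc Y ω * Real.exp (η * D ω) ≤ Y ω * (1 + η * D ω + η ^ 2 * c) :=
              mul_le_mul_of_nonneg_left hq hY0
          _ = 0 + (1 + η ^ 2 * c) * Z ω + η * (Z ω * D ω) := by rw [hZω]; ring
      · have hZω : Z ω = 0 := Set.indicator_of_notMem (show ω ∉ A from h) Y
        rw [hW_def]
        simp only [if_neg h, hZω, mul_zero, zero_mul, add_zero]
        have hX1 : X (t + 1) ω ≤ B + ν := by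
          have h2 : X (t + 1) ω - X t ω ≤ ν := (abs_le.mp hd).2
          push_neg at h
          linarith
        have hexp : η * X (t + 1) ω ≤ ν + η * B := by nlinarith
        rw [hK_def]
        exact Real.exp_le_exp.mpr hexp
    have hRHSint : Integrable
        (fun ω => W ω + (1 + η ^ 2 * c) * Z ω + η * (Z ω * D ω)) μ :=
      (hWint.add (hZint.const_mul _)).add (hZDint.const_mul _)
    have hI1 : ∫ ω, Real.exp (η * X (t + 1) ω) ∂μ ≤
        ∫ ω, (W ω + (1 + η ^ 2 * c) * Z ω + η * (Z ω * D ω)) ∂μ :=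
      integral_mono_ae (hYint (t + 1)) hRHSint hpt
    have i1 : Integrable (fun ω => W ω + (1 + η ^ 2 * c) * Z ω) μ :=
      hWint.add (hZint.const_mul _)
    have i2 : Integrable (fun ω => η * (Z ω * D ω)) μ := hZDint.const_mul _
    rw [integral_add i1 i2, integral_add hWint (hZint.const_mul _),
      integral_const_mul, integral_const_mul] at hI1
    have hIW : ∫ ω, W ω ∂μ ≤ K := by
      calc ∫ ω, W ω ∂μ ≤ ∫ _ω, K ∂μ := by
            refine integral_mono hWint (integrable_const K) fun ω => ?_
            have := hWbd ω
            rw [Real.norm_eq_abs] at this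
            exact (le_abs_self _).trans this
        _ = K := by simp
    have hmul : μ[Z * D | ℱ t] =ᵐ[μ] Z * μ[D | ℱ t] :=
      condExp_stronglyMeasurable_mul_of_bound (ℱ.le t) hZsm' hDint M hZbd
    have hIZD : ∫ ω, Z ω * D ω ∂μ ≤ -α * ∫ ω, Z ω ∂μ := by
      have e1 : ∫ ω, (μ[Z * D | ℱ t]) ω ∂μ = ∫ ω, Z ω * D ω ∂μ :=
        integral_condExp (ℱ.le t)
      have e2 : ∫ ω, (μ[Z * D | ℱ t]) ω ∂μ = ∫ ω, Z ω * (μ[D | ℱ t]) ω ∂μ :=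
        integral_congr_ae hmul
      have hint1 : Integrable (fun ω => Z ω * (μ[D | ℱ t]) ω) μ :=
        Integrable.bdd_mul integrable_condExp hZm.aestronglyMeasurable hZbd
      have e3 : ∫ ω, Z ω * (μ[D | ℱ t]) ω ∂μ ≤ ∫ ω, -α * Z ω ∂μ := by
        refine integral_mono_ae hint1 (hZint.const_mul _) ?_
        filter_upwards [hdrift t] with ω h
        by_cases hω : B < X t ω
        · have hZω : Z ω = Y ω := Set.indicator_of_mem (show ω ∈ A from hω) Y
          have hcond := h hω
          have hY0 : 0 ≤ Y ω := (Real.exp_pos _).le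
          rw [hZω]
          nlinarith
        · have hZω : Z ω = 0 := Set.indicator_of_notMem (show ω ∉ A from hω) Y
          rw [hZω]; simp
      have e4 : ∫ ω, -α * Z ω ∂μ = -α * ∫ ω, Z ω ∂μ := integral_const_mul _ _
      linarith
    have hIZ0 : 0 ≤ ∫ ω, Z ω ∂μ := integral_nonneg hZnonneg
    have hIZY : ∫ ω, Z ω ∂μ ≤ ∫ ω, Y ω ∂μ := integral_mono hZint (hYint t) hZleY
    have hcoef : 1 + η ^ 2 * c - η * α ≤ ρ := by
      rw [hρ]
      nlinarith [mul_le_mul_of_nonneg_left hηc hη0.le]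
    have h5 : η * ∫ ω, Z ω * D ω ∂μ ≤ η * (-α * ∫ ω, Z ω ∂μ) :=
      mul_le_mul_of_nonneg_left hIZD hη0.le
    nlinarith [mul_le_mul_of_nonneg_right hcoef hIZ0,
      mul_le_mul_of_nonneg_left hIZY hρ0.le]
  intro t
  induction t with
  | zero =>
      have heq : (fun ω => Real.exp (η * X 0 ω)) = fun _ => Real.exp (η * x₀) :=
        funext fun ω => by rw [hX0]
      rw [heq, integral_const]
      simp
  | succ t ih =>
      have h1 := hrec t
      have h2 : ρ * ∫ ω, Real.exp (η * X t ω) ∂μ ≤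
          ρ * (ρ ^ t * Real.exp (η * x₀) + ((1 - ρ ^ t) / (1 - ρ)) * K) :=
        mul_le_mul_of_nonneg_left ih hρ0.le
      have h1ρ : (1 : ℝ) - ρ ≠ 0 := sub_ne_zero.mpr hρ1.ne'
      have h3 : ρ * (ρ ^ t * Real.exp (η * x₀) + ((1 - ρ ^ t) / (1 - ρ)) * K) + K =
          ρ ^ (t + 1) * Real.exp (η * x₀) + ((1 - ρ ^ (t + 1)) / (1 - ρ)) * K := by
        field_simp
        ring
      linarith
end

section
/- Let (X_t)_{t∈ℕ} be as in the drift setting with deterministic initial value X_0 = x₀. Then for every t ≥ 0 and every b ∈ ℝ, ℙ(X_t ≥ b) ≤ ρ^t e^{η(x₀ − b)} + ((1 − ρ^t)/(1 − ρ)) e^{ν + η(B − b)}. -/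
open MeasureTheory Real

set_option maxHeartbeats 1000000

lemma exp_series_tail (x : ℝ) :
    Real.exp x = 1 + x + ∑' n : ℕ, x ^ (n + 2) / (n + 2).factorial := by
  have hs : Summable (fun n : ℕ => x ^ n / n.factorial) := Real.summable_pow_div_factorial x
  have h := Summable.sum_add_tsum_nat_add 2 hs
  have hexp : Real.exp x = ∑' n : ℕ, x ^ n / n.factorial := by
    rw [Real.exp_eq_exp_ℝ, NormedSpace.exp_eq_tsum_div]
  rw [hexp, ← h]
  simp [Finset.sum_range_succ, add_comm]

lemma exp_quad_bound {ν z : ℝ} (hν : 0 < ν) (hz : |z| ≤ ν) :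
    Real.exp z ≤ 1 + z + z ^ 2 / ν ^ 2 * (Real.exp ν - ν - 1) := by
  have hsz : Summable (fun n : ℕ => z ^ (n + 2) / (n + 2).factorial) :=
    (Real.summable_pow_div_factorial z).comp_injective (add_left_injective 2)
  have hsν : Summable (fun n : ℕ => ν ^ (n + 2) / (n + 2).factorial) :=
    (Real.summable_pow_div_factorial ν).comp_injective (add_left_injective 2)
  rw [exp_series_tail z, exp_series_tail ν]
  have hrw : 1 + ν + (∑' n : ℕ, ν ^ (n + 2) / (n + 2).factorial) - ν - 1
      = ∑' n : ℕ, ν ^ (n + 2) / (n + 2).factorial := by ring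
  rw [hrw]
  gcongr 1 + z + ?_
  rw [← tsum_mul_left]
  refine Summable.tsum_le_tsum (fun n => ?_) hsz (hsν.mul_left _)
  have h1 : z ^ (n + 2) ≤ z ^ 2 * ν ^ n := by
    calc z ^ (n + 2) ≤ |z ^ (n + 2)| := le_abs_self _
    _ = |z| ^ 2 * |z| ^ n := by rw [abs_pow, pow_add, mul_comm]
    _ ≤ |z| ^ 2 * ν ^ n := by gcongr
    _ = z ^ 2 * ν ^ n := by rw [sq_abs]
  have h2 : z ^ 2 / ν ^ 2 * (ν ^ (n + 2) / (n + 2).factorial)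
      = z ^ 2 * ν ^ n / (n + 2).factorial := by
    field_simp
    ring
  rw [h2]
  gcongr

lemma geom_step_aux {ρ E K : ℝ} (h : ρ < 1) (t : ℕ) :
    ρ * (ρ ^ t * E + (1 - ρ ^ t) / (1 - ρ) * K) + K
      = ρ ^ (t + 1) * E + (1 - ρ ^ (t + 1)) / (1 - ρ) * K := by
  have h1 : 1 - ρ ≠ 0 := by linarith
  field_simp
  ring

/-- Hajek-type tail bound: for a process with bounded increments, negative drift
above level `B`, and deterministic initial value `x₀`,
`ℙ(X t ≥ b) ≤ ρ^t e^{η(x₀ − b)} + ((1 − ρ^t)/(1 − ρ)) e^{ν + η(B − b)}`. -/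
theorem stmt_1
    {Ω : Type*} {m : MeasurableSpace Ω} {μ : Measure Ω} [IsProbabilityMeasure μ]
    (ℱ : Filtration ℕ m)
    (X : ℕ → Ω → ℝ) (hXadapted : Adapted ℱ X)
    (x₀ ν α B η ρ : ℝ)
    (hX0 : ∀ ω, X 0 ω = x₀)
    (hν : 0 < ν)
    (hinc : ∀ t : ℕ, ∀ᵐ ω ∂μ, |X (t + 1) ω - X t ω| ≤ ν)
    (hα : 0 < α) (hB : 0 < B)
    (hdrift : ∀ t : ℕ, ∀ᵐ ω ∂μ,
      X t ω > B → (μ[fun ω' => X (t + 1) ω' - X t ω' | ℱ t]) ω ≤ -α)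
    (hη0 : 0 < η) (hη1 : η ≤ min 1 (α / (2 * (Real.exp ν - ν - 1))))
    (hρ : ρ = 1 - η * α / 2) (hρ0 : 0 < ρ) (hρ1 : ρ < 1) :
    ∀ t : ℕ, ∀ b : ℝ, (μ {ω | X t ω ≥ b}).toReal ≤
      ρ ^ t * Real.exp (η * (x₀ - b)) +
        ((1 - ρ ^ t) / (1 - ρ)) * Real.exp (ν + η * (B - b)) := by
  set c : ℝ := Real.exp ν - ν - 1 with hc_def
  have hc : 0 < c := by
    have := Real.add_one_lt_exp (ne_of_gt hν)
    rw [hc_def]; linarith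
  have hη_le1 : η ≤ 1 := le_trans hη1 (min_le_left _ _)
  have hηc : η * c ≤ α / 2 := by
    have h2 : η ≤ α / (2 * c) := le_trans hη1 (min_le_right _ _)
    rw [le_div_iff₀ (by positivity)] at h2
    nlinarith
  have hXm : ∀ t, Measurable (X t) := fun t => (hXadapted t).mono (ℱ.le t) le_rfl
  set Y : ℕ → Ω → ℝ := fun t ω => Real.exp (η * X t ω) with hY_def
  have hYm : ∀ t, Measurable (Y t) := fun t => (measurable_const.mul (hXm t)).exp
  have hYpos : ∀ t ω, 0 < Y t ω := fun t ω => Real.exp_pos _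
  have hXbd : ∀ t : ℕ, ∀ᵐ ω ∂μ, X t ω ≤ x₀ + t * ν := by
    intro t
    induction t with
    | zero => filter_upwards with ω; simp [hX0 ω]
    | succ t ih =>
      filter_upwards [hinc t, ih] with ω h1 h2
      have h3 := (abs_le.mp h1).2
      push_cast
      linarith
  have hYint : ∀ t, Integrable (Y t) μ := by
    intro t
    refine Integrable.mono' (integrable_const (Real.exp (η * (x₀ + t * ν))))
      (hYm t).aestronglyMeasurable ?_
    filter_upwards [hXbd t] with ω h
    rw [Real.norm_eq_abs, abs_of_pos (Real.exp_pos _)]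
    exact Real.exp_le_exp.mpr (by nlinarith)
  have hΔint : ∀ t, Integrable (fun ω => X (t + 1) ω - X t ω) μ := by
    intro t
    refine Integrable.mono' (integrable_const ν)
      ((hXm (t + 1)).sub (hXm t)).aestronglyMeasurable ?_
    filter_upwards [hinc t] with ω h; rwa [Real.norm_eq_abs]
  set K : ℝ := Real.exp (ν + η * B) with hK_def
  have hK0 : 0 < K := Real.exp_pos _
  -- key recursion
  have key : ∀ t : ℕ, ∫ ω, Y (t + 1) ω ∂μ ≤ ρ * ∫ ω, Y t ω ∂μ + K := by
    intro t
    set A : Set Ω := {ω | X t ω > B} with hA_def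
    have hAf : MeasurableSet[ℱ t] A :=
      measurableSet_lt measurable_const (hXadapted t)
    have hAm : MeasurableSet A := ℱ.le t _ hAf
    have hYsm : StronglyMeasurable[ℱ t] (Y t) :=
      Real.continuous_exp.comp_stronglyMeasurable ((hXadapted t).stronglyMeasurable.const_mul η)
    set f : Ω → ℝ := A.indicator (Y t) with hf_def
    have hfm : StronglyMeasurable[ℱ t] f := hYsm.indicator hAf
    have hfbd : ∀ᵐ ω ∂μ, ‖f ω‖ ≤ Real.exp (η * (x₀ + t * ν)) := by
      filter_upwards [hXbd t] with ω h
      calc ‖f ω‖ ≤ ‖Y t ω‖ := norm_indicator_le_norm_self _ _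
      _ = Y t ω := by rw [Real.norm_eq_abs, abs_of_pos (hYpos t ω)]
      _ ≤ Real.exp (η * (x₀ + t * ν)) := Real.exp_le_exp.mpr (by nlinarith)
    have hfint : Integrable f μ := (hYint t).indicator hAm
    have hfnn : ∀ ω, 0 ≤ f ω := fun ω =>
      Set.indicator_nonneg (fun ω _ => (hYpos t ω).le) ω
    set Δ : Ω → ℝ := fun ω => X (t + 1) ω - X t ω with hΔ_def
    have hfΔint : Integrable (fun ω => f ω * Δ ω) μ :=
      (hΔint t).bdd_mul ((hfm.mono (ℱ.le t)).aestronglyMeasurable) hfbd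
    set g : Ω → ℝ := μ[Δ|ℱ t] with hg_def
    have hpull : μ[f * Δ|ℱ t] =ᵐ[μ] f * g :=
      condExp_mul_of_stronglyMeasurable_left hfm hfΔint (hΔint t)
    have hstep_b : ∫ ω, f ω * Δ ω ∂μ = ∫ ω, f ω * g ω ∂μ := by
      calc ∫ ω, f ω * Δ ω ∂μ = ∫ ω, (μ[f * Δ|ℱ t]) ω ∂μ :=
            (integral_condExp (ℱ.le t)).symm
      _ = ∫ ω, f ω * g ω ∂μ := integral_congr_ae hpull
    have hfgint : Integrable (fun ω => f ω * g ω) μ :=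
      integrable_condExp.bdd_mul ((hfm.mono (ℱ.le t)).aestronglyMeasurable) hfbd
    have hgle : ∀ᵐ ω ∂μ, f ω * g ω ≤ -α * f ω := by
      filter_upwards [hdrift t] with ω hd
      by_cases hω : ω ∈ A
      · rw [hf_def, Set.indicator_of_mem hω]
        have hga : g ω ≤ -α := hd hω
        nlinarith [(hYpos t ω).le]
      · rw [hf_def, Set.indicator_of_notMem hω]; simp
    have hstep_c : ∫ ω, f ω * Δ ω ∂μ ≤ -α * ∫ ω, f ω ∂μ := by
      rw [hstep_b]
      calc ∫ ω, f ω * g ω ∂μ ≤ ∫ ω, -α * f ω ∂μ :=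
            integral_mono_ae hfgint (hfint.const_mul _) hgle
      _ = -α * ∫ ω, f ω ∂μ := integral_const_mul _ _
    have hptA : ∀ᵐ ω ∂μ, A.indicator (Y (t + 1)) ω ≤
        (1 + η ^ 2 * c) * f ω + η * (f ω * Δ ω) := by
      filter_upwards [hinc t] with ω h
      by_cases hω : ω ∈ A
      · rw [Set.indicator_of_mem hω, hf_def, Set.indicator_of_mem hω]
        have hYsplit : Y (t + 1) ω = Y t ω * Real.exp (η * Δ ω) := by
          rw [hY_def]; dsimp only; rw [← Real.exp_add, hΔ_def]; ring_nf
        have hzb : |η * Δ ω| ≤ ν := by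
          rw [abs_mul, abs_of_pos hη0]
          calc η * |Δ ω| ≤ 1 * ν :=
                mul_le_mul hη_le1 h (abs_nonneg _) zero_le_one
          _ = ν := one_mul ν
        have hquad := exp_quad_bound hν hzb
        have hΔω : Δ ω = X (t + 1) ω - X t ω := rfl
        have habs : |Δ ω| ≤ ν := by rw [hΔω]; exact h
        have hsq : (η * Δ ω) ^ 2 ≤ η ^ 2 * ν ^ 2 := by
          have h2 : Δ ω ^ 2 ≤ ν ^ 2 := sq_le_sq' (by linarith [(abs_le.mp habs).1]) (abs_le.mp habs).2
          calc (η * Δ ω) ^ 2 = η ^ 2 * Δ ω ^ 2 := by ring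
          _ ≤ η ^ 2 * ν ^ 2 := by nlinarith
        have h2 : (η * Δ ω) ^ 2 / ν ^ 2 * c ≤ η ^ 2 * c := by
          apply mul_le_mul_of_nonneg_right _ hc.le
          rw [div_le_iff₀ (by positivity)]
          linarith
        rw [← hc_def] at hquad
        have hexp : Real.exp (η * Δ ω) ≤ 1 + η * Δ ω + η ^ 2 * c :=
          hquad.trans (add_le_add_right h2 _)
        calc Y (t + 1) ω = Y t ω * Real.exp (η * Δ ω) := hYsplit
        _ ≤ Y t ω * (1 + η * Δ ω + η ^ 2 * c) :=
            mul_le_mul_of_nonneg_left hexp (hYpos t ω).le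
        _ = (1 + η ^ 2 * c) * Y t ω + η * (Y t ω * Δ ω) := by ring
      · rw [Set.indicator_of_notMem hω, hf_def, Set.indicator_of_notMem hω]; simp
    have hfYt : ∫ ω, f ω ∂μ ≤ ∫ ω, Y t ω ∂μ :=
      integral_mono hfint (hYint t) (Set.indicator_le_self' (fun ω _ => (hYpos t ω).le))
    have hfI0 : 0 ≤ ∫ ω, f ω ∂μ := integral_nonneg hfnn
    have hpart2 : ∫ ω in A, Y (t + 1) ω ∂μ ≤ ρ * ∫ ω, Y t ω ∂μ := by
      rw [← integral_indicator hAm]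
      calc ∫ ω, A.indicator (Y (t + 1)) ω ∂μ
          ≤ ∫ ω, ((1 + η ^ 2 * c) * f ω + η * (f ω * Δ ω)) ∂μ :=
            integral_mono_ae ((hYint (t + 1)).indicator hAm)
              ((hfint.const_mul _).add (hfΔint.const_mul _)) hptA
      _ = (1 + η ^ 2 * c) * ∫ ω, f ω ∂μ + η * ∫ ω, f ω * Δ ω ∂μ := by
            rw [integral_add (hfint.const_mul _) (hfΔint.const_mul _),
              integral_const_mul, integral_const_mul]
      _ ≤ (1 + η ^ 2 * c) * ∫ ω, f ω ∂μ + η * (-α * ∫ ω, f ω ∂μ) := by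
            have := mul_le_mul_of_nonneg_left hstep_c hη0.le
            linarith
      _ = (1 + η ^ 2 * c - η * α) * ∫ ω, f ω ∂μ := by ring
      _ ≤ ρ * ∫ ω, f ω ∂μ := by
            apply mul_le_mul_of_nonneg_right _ hfI0
            rw [hρ]; nlinarith
      _ ≤ ρ * ∫ ω, Y t ω ∂μ := mul_le_mul_of_nonneg_left hfYt hρ0.le
    have hpart1 : ∫ ω in Aᶜ, Y (t + 1) ω ∂μ ≤ K := by
      have hpt1 : ∀ᵐ ω ∂μ.restrict Aᶜ, Y (t + 1) ω ≤ K := by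
        rw [ae_restrict_iff' hAm.compl]
        filter_upwards [hinc t] with ω h hω
        have hXB : X t ω ≤ B := not_lt.mp hω
        have h3 : X (t + 1) ω ≤ B + ν := by have := (abs_le.mp h).2; linarith
        rw [hY_def]; dsimp only; rw [hK_def]
        apply Real.exp_le_exp.mpr
        nlinarith
      calc ∫ ω in Aᶜ, Y (t + 1) ω ∂μ ≤ ∫ _ω in Aᶜ, K ∂μ :=
            integral_mono_ae ((hYint (t + 1)).restrict) (integrable_const K) hpt1
      _ = (μ Aᶜ).toReal * K := by rw [setIntegral_const, smul_eq_mul]; rfl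
      _ ≤ K := by
            have h1 : (μ Aᶜ).toReal ≤ 1 := by
              simpa using ENNReal.toReal_mono ENNReal.one_ne_top prob_le_one
            nlinarith
    calc ∫ ω, Y (t + 1) ω ∂μ
        = ∫ ω in A, Y (t + 1) ω ∂μ + ∫ ω in Aᶜ, Y (t + 1) ω ∂μ :=
          (integral_add_compl hAm (hYint (t + 1))).symm
    _ ≤ ρ * ∫ ω, Y t ω ∂μ + K := add_le_add hpart2 hpart1
  -- induction on t
  have Ebound : ∀ t : ℕ, ∫ ω, Y t ω ∂μ ≤
      ρ ^ t * Real.exp (η * x₀) + (1 - ρ ^ t) / (1 - ρ) * K := by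
    intro t
    induction t with
    | zero =>
      have : ∫ ω, Y 0 ω ∂μ = Real.exp (η * x₀) := by
        rw [hY_def]
        have : (fun ω => Real.exp (η * X 0 ω)) = fun _ω => Real.exp (η * x₀) := by
          funext ω; rw [hX0 ω]
        rw [this, integral_const, probReal_univ, one_smul]
      rw [this]; simp
    | succ t ih =>
      have h1ρ : (0:ℝ) < 1 - ρ := by linarith
      calc ∫ ω, Y (t + 1) ω ∂μ ≤ ρ * ∫ ω, Y t ω ∂μ + K := key t
      _ ≤ ρ * (ρ ^ t * Real.exp (η * x₀) + (1 - ρ ^ t) / (1 - ρ) * K) + K :=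
          by have := mul_le_mul_of_nonneg_left ih hρ0.le; linarith
      _ = ρ ^ (t + 1) * Real.exp (η * x₀) + (1 - ρ ^ (t + 1)) / (1 - ρ) * K :=
          geom_step_aux hρ1 t
  intro t b
  have hset : {ω | X t ω ≥ b} = {ω | Real.exp (η * b) ≤ Y t ω} := by
    ext ω
    simp only [Set.mem_setOf_eq, ge_iff_le]
    rw [show Y t ω = Real.exp (η * X t ω) from rfl, Real.exp_le_exp]
    exact (mul_le_mul_iff_of_pos_left hη0).symm
  have hmarkov := mul_meas_ge_le_integral_of_nonneg
    (μ := μ) (f := Y t) (ae_of_all μ fun ω => (hYpos t ω).le) (hYint t) (Real.exp (η * b))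
  have hq0 : (0:ℝ) ≤ (1 - ρ ^ t) / (1 - ρ) :=
    div_nonneg (by nlinarith [pow_le_one₀ hρ0.le hρ1.le (n := t)]) (by linarith)
  have h1 : (μ {ω | Real.exp (η * b) ≤ Y t ω}).toReal ≤
      (∫ ω, Y t ω ∂μ) / Real.exp (η * b) := by
    rw [le_div_iff₀ (Real.exp_pos _)]
    linarith [show Real.exp (η * b) * (μ {ω | Real.exp (η * b) ≤ Y t ω}).toReal ≤ ∫ ω, Y t ω ∂μ from hmarkov]
  rw [hset]
  have e1 : Real.exp (η * (x₀ - b)) = Real.exp (η * x₀) / Real.exp (η * b) := by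
    rw [← Real.exp_sub]; congr 1; ring
  have e2 : Real.exp (ν + η * (B - b)) = K / Real.exp (η * b) := by
    rw [hK_def, ← Real.exp_sub]; congr 1; ring
  calc (μ {ω | Real.exp (η * b) ≤ Y t ω}).toReal
      ≤ (∫ ω, Y t ω ∂μ) / Real.exp (η * b) := h1
  _ ≤ (ρ ^ t * Real.exp (η * x₀) + (1 - ρ ^ t) / (1 - ρ) * K) / Real.exp (η * b) := by
      gcongr
      exact Ebound t
  _ = ρ ^ t * Real.exp (η * (x₀ - b)) + (1 - ρ ^ t) / (1 - ρ) * Real.exp (ν + η * (B - b)) := by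
      rw [e1, e2]; ring
end

section
/- Let (X_t)_{t∈ℕ} be as in the drift setting with deterministic initial value X_0 = x₀, and for a ∈ ℝ define the hitting time T_a = inf{t ≥ 0 : X_t ≤ a}. Then for every a ≥ B and every k ≥ 0, ℙ(T_a > k) ≤ e^{η(x₀ − a)} ρ^k. -/
open MeasureTheory Real

lemma exp_interp {η s : ℝ} (hη0 : 0 ≤ η) (hη1 : η ≤ 1) :
    Real.exp (η * s) ≤ 1 + η * (Real.exp s - 1) := by
  have h := convexOn_exp.2 (Set.mem_univ s) (Set.mem_univ (0:ℝ)) hη0 (by linarith : (0:ℝ) ≤ 1 - η)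
    (by ring)
  simp only [smul_eq_mul, mul_zero, add_zero, Real.exp_zero] at h
  linarith

lemma key1 {η : ℝ} (hη0 : 0 ≤ η) (hη1 : η ≤ 1) {s : ℝ} (hs : 0 ≤ s) :
    Real.exp (η * s) - 1 - η * s ≤ η ^ 2 * (Real.exp s - 1 - s) := by
  set g : ℝ → ℝ := fun s => η ^ 2 * (Real.exp s - s - 1) - (Real.exp (η * s) - η * s - 1) with hg
  have hd : ∀ x : ℝ, HasDerivAt g (η ^ 2 * (Real.exp x - 1) - (η * Real.exp (η * x) - η)) x := by
    intro x
    have h1 : HasDerivAt (fun y : ℝ => Real.exp y - y - 1) (Real.exp x - 1) x :=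
      ((Real.hasDerivAt_exp x).sub (hasDerivAt_id x)).sub_const 1
    have h2 : HasDerivAt (fun y : ℝ => Real.exp (η * y)) (η * Real.exp (η * x)) x := by
      have := (Real.hasDerivAt_exp (η * x)).comp x ((hasDerivAt_id x).const_mul η)
      simpa [mul_comm, Function.comp_def] using this
    have h3 : HasDerivAt (fun y : ℝ => Real.exp (η * y) - η * y - 1)
        (η * Real.exp (η * x) - η) x :=
      by simpa using (h2.sub ((hasDerivAt_id x).const_mul η)).sub_const 1
    exact (h1.const_mul (η ^ 2)).sub h3
  have hmono : Monotone g := by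
    apply monotone_of_hasDerivAt_nonneg hd
    intro x
    have := exp_interp hη0 hη1 (s := x)
    simp only [Pi.zero_apply]
    nlinarith
  have := hmono hs
  simp only [hg, mul_zero, Real.exp_zero] at this
  nlinarith [this]

lemma key2 {t : ℝ} (ht : 0 ≤ t) : Real.exp (-t) - 1 + t ≤ Real.exp t - t - 1 := by
  set g : ℝ → ℝ := fun x => Real.exp x - Real.exp (-x) - 2 * x with hg
  have hd : ∀ x : ℝ, HasDerivAt g (Real.exp x + Real.exp (-x) - 2) x := by
    intro x
    have h1 : HasDerivAt (fun y : ℝ => Real.exp (-y)) (-Real.exp (-x)) x := by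
      have := (Real.hasDerivAt_exp (-x)).comp x (hasDerivAt_neg x)
      simpa [Function.comp_def] using this
    have := ((Real.hasDerivAt_exp x).sub h1).sub ((hasDerivAt_id x).const_mul 2)
    exact this.congr_deriv (by ring)
  have hmono : Monotone g := by
    apply monotone_of_hasDerivAt_nonneg hd
    intro x
    have h1 : Real.exp x * Real.exp (-x) = 1 := by rw [← Real.exp_add]; simp
    simp only [Pi.zero_apply]
    nlinarith [sq_nonneg (Real.exp x - 1), Real.exp_pos x]
  have := hmono ht
  simp only [hg] at this
  simp only [neg_zero, Real.exp_zero] at this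
  linarith

lemma key3 {s ν : ℝ} (hs : 0 ≤ s) (hsν : s ≤ ν) :
    Real.exp s - s ≤ Real.exp ν - ν := by
  have h1 : Real.exp ν = Real.exp s * Real.exp (ν - s) := by rw [← Real.exp_add]; ring_nf
  nlinarith [Real.add_one_le_exp (ν - s), Real.one_le_exp hs]

lemma key_pt {η ν x : ℝ} (hν : 0 < ν) (hη0 : 0 ≤ η) (hη1 : η ≤ 1) (hx : |x| ≤ ν) :
    Real.exp (η * x) ≤ 1 + η * x + η ^ 2 * (Real.exp ν - ν - 1) := by
  have habs : Real.exp (η * x) - 1 - η * x ≤ Real.exp (η * |x|) - 1 - η * |x| := by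
    rcases abs_cases x with ⟨h, _⟩ | ⟨h, hneg⟩
    · rw [h]
    · rw [h]
      have := key2 (t := η * (-x)) (by nlinarith)
      simp only [mul_neg, neg_neg] at this ⊢
      linarith
  have h1 := key1 hη0 hη1 (abs_nonneg x)
  have h3 := key3 (abs_nonneg x) hx
  nlinarith [sq_nonneg η]

/-- Hajek-type hitting-time tail bound: for a process with bounded increments,
negative drift above level `B`, and deterministic initial value `x₀`, the
hitting time `T_a = inf {t : X t ≤ a}` (with `inf ∅ = ∞`) satisfies
`ℙ(T_a > k) ≤ e^{η(x₀ − a)} ρ^k` for every `a ≥ B`. -/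
theorem stmt_2
    {Ω : Type*} {m : MeasurableSpace Ω} {μ : Measure Ω} [IsProbabilityMeasure μ]
    (ℱ : Filtration ℕ m)
    (X : ℕ → Ω → ℝ) (hXadapted : Adapted ℱ X)
    (x₀ ν α B η ρ : ℝ)
    (hX0 : ∀ ω, X 0 ω = x₀)
    (hν : 0 < ν)
    (hinc : ∀ t : ℕ, ∀ᵐ ω ∂μ, |X (t + 1) ω - X t ω| ≤ ν)
    (hα : 0 < α) (hB : 0 < B)
    (hdrift : ∀ t : ℕ, ∀ᵐ ω ∂μ,
      X t ω > B → (μ[fun ω' => X (t + 1) ω' - X t ω' | ℱ t]) ω ≤ -α)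
    (hη0 : 0 < η) (hη1 : η ≤ min 1 (α / (2 * (Real.exp ν - ν - 1))))
    (hρ : ρ = 1 - η * α / 2) (hρ0 : 0 < ρ) (hρ1 : ρ < 1)
    (a : ℝ) (ha : a ≥ B)
    (T : Ω → ℕ∞)
    (hT : ∀ ω, T ω = ⨅ (t : ℕ) (_ : X t ω ≤ a), (t : ℕ∞)) :
    ∀ k : ℕ, (μ {ω | T ω > (k : ℕ∞)}).toReal ≤ Real.exp (η * (x₀ - a)) * ρ ^ k := by
  have hc : 0 < Real.exp ν - ν - 1 := by nlinarith [Real.add_one_lt_exp hν.ne']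
  have hη1' : η ≤ 1 := le_trans hη1 (min_le_left _ _)
  have hηc : η * (Real.exp ν - ν - 1) ≤ α / 2 := by
    calc η * (Real.exp ν - ν - 1) ≤ α / (2 * (Real.exp ν - ν - 1)) * (Real.exp ν - ν - 1) :=
          mul_le_mul_of_nonneg_right (le_trans hη1 (min_le_right _ _)) hc.le
      _ = α / 2 := by field_simp
  have hXm : ∀ t, Measurable (X t) := fun t => ((hXadapted t).mono (ℱ.le t) le_rfl)
  set D : ℕ → Ω → ℝ := fun t ω => X (t + 1) ω - X t ω with hDdef
  set G : ℕ → Ω → ℝ := fun t ω => Real.exp (η * D t ω) with hGdef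
  set f : ℕ → Ω → ℝ := fun t ω => Real.exp (η * X t ω) with hfdef
  set A : ℕ → Set Ω := fun k => {ω | ∀ t ≤ k, a < X t ω} with hAdef
  have hAmF : ∀ k, MeasurableSet[ℱ k] (A k) := by
    intro k
    have hEq : A k = ⋂ t, ⋂ (_ : t ≤ k), {ω | a < X t ω} := by
      ext ω; simp [hAdef]
    rw [hEq]
    exact MeasurableSet.iInter fun t => MeasurableSet.iInter fun ht =>
      measurableSet_lt measurable_const ((hXadapted t).mono (ℱ.mono ht) le_rfl)
  have hAm : ∀ k, MeasurableSet (A k) := fun k => ℱ.le k _ (hAmF k)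
  have hTset : ∀ k : ℕ, {ω | T ω > (k : ℕ∞)} = A k := by
    intro k
    ext ω
    simp only [Set.mem_setOf_eq, hT ω, hAdef, gt_iff_lt]
    constructor
    · intro h t htk
      by_contra hle
      push_neg at hle
      exact absurd h (not_lt.2 (le_trans (iInf_le_of_le t (iInf_le _ hle))
        (by exact_mod_cast htk)))
    · intro h
      have h1 : ((k + 1 : ℕ) : ℕ∞) ≤ ⨅ (t : ℕ) (_ : X t ω ≤ a), (t : ℕ∞) := by
        refine le_iInf fun t => le_iInf fun hta => ?_
        have : ¬ t ≤ k := fun htk => absurd hta (not_le.2 (h t htk))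
        exact_mod_cast Nat.succ_le_of_lt (not_le.1 this)
      exact lt_of_lt_of_le (by exact_mod_cast Nat.lt_succ_self k) h1
  have hbd : ∀ᵐ ω ∂μ, ∀ t, X t ω ≤ x₀ + t * ν := by
    filter_upwards [ae_all_iff.2 hinc] with ω hω
    intro t
    induction t with
    | zero => simp [hX0 ω]
    | succ t ih =>
      have h := (abs_le.1 (hω t)).2
      push_cast
      push_cast at ih
      nlinarith
  have hfm : ∀ t, Measurable (f t) := fun t =>
    Real.measurable_exp.comp ((hXm t).const_mul η)
  have hfpos : ∀ t ω, 0 < f t ω := fun t ω => Real.exp_pos _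
  have hfint : ∀ t, Integrable (f t) μ := by
    intro t
    refine (integrable_const (Real.exp (η * (x₀ + t * ν)))).mono'
      (hfm t).aestronglyMeasurable ?_
    filter_upwards [hbd] with ω hω
    rw [Real.norm_eq_abs, abs_of_pos (hfpos t ω)]
    exact Real.exp_le_exp.2 (mul_le_mul_of_nonneg_left (hω t) hη0.le)
  have hDm : ∀ t, Measurable (D t) := fun t => (hXm (t + 1)).sub (hXm t)
  have hDint : ∀ t, Integrable (D t) μ := by
    intro t
    refine (integrable_const ν).mono' (hDm t).aestronglyMeasurable ?_
    filter_upwards [hinc t] with ω hω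
    rwa [Real.norm_eq_abs]
  have hGm : ∀ t, Measurable (G t) := fun t =>
    Real.measurable_exp.comp ((hDm t).const_mul η)
  have hGint : ∀ t, Integrable (G t) μ := by
    intro t
    refine (integrable_const (Real.exp (η * ν))).mono' (hGm t).aestronglyMeasurable ?_
    filter_upwards [hinc t] with ω hω
    rw [Real.norm_eq_abs, abs_of_pos (Real.exp_pos _)]
    exact Real.exp_le_exp.2 (mul_le_mul_of_nonneg_left ((abs_le.1 hω).2) hη0.le)
  -- conditional expectation bound
  have hcond : ∀ k, ∀ᵐ ω ∂μ, a < X k ω → (μ[G k | ℱ k]) ω ≤ ρ := by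
    intro k
    have hc1 : G k ≤ᵐ[μ] fun ω => 1 + η * D k ω + η ^ 2 * (Real.exp ν - ν - 1) := by
      filter_upwards [hinc k] with ω hω
      exact key_pt hν hη0.le hη1' hω
    have hint2 : Integrable (fun ω => 1 + η * D k ω + η ^ 2 * (Real.exp ν - ν - 1)) μ := by
      refine (integrable_const (1 + η * ν + η ^ 2 * (Real.exp ν - ν - 1))).mono'
        ((((hDm k).const_mul η).const_add 1).add_const _).aestronglyMeasurable ?_
      filter_upwards [hinc k] with ω hω
      have hD : |D k ω| ≤ ν := hω
      rw [Real.norm_eq_abs, abs_le]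
      constructor <;> nlinarith [abs_le.1 hD, hη0.le, hc.le, sq_nonneg η]
    have hc2 : μ[G k | ℱ k] ≤ᵐ[μ]
        μ[fun ω => 1 + η * D k ω + η ^ 2 * (Real.exp ν - ν - 1) | ℱ k] :=
      condExp_mono (hGint k) hint2 hc1
    have hsplit : (fun ω => 1 + η * D k ω + η ^ 2 * (Real.exp ν - ν - 1)) =
        (η • D k) + fun _ => 1 + η ^ 2 * (Real.exp ν - ν - 1) := by
      ext ω; simp [smul_eq_mul]; ring
    have hc3 : μ[fun ω => 1 + η * D k ω + η ^ 2 * (Real.exp ν - ν - 1) | ℱ k] =ᵐ[μ]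
        fun ω => η * (μ[D k | ℱ k]) ω + (1 + η ^ 2 * (Real.exp ν - ν - 1)) := by
      rw [hsplit]
      refine (condExp_add ((hDint k).smul η) (integrable_const _) (ℱ k)).trans ?_
      have h4 := condExp_smul (μ := μ) (m := ℱ k) η (D k)
      rw [condExp_const (ℱ.le k)]
      filter_upwards [h4] with ω hω
      simp only [Pi.add_apply, Pi.smul_apply, smul_eq_mul] at hω ⊢
      rw [hω]
    filter_upwards [hc2, hc3, hdrift k] with ω h2 h3 h4 hXk
    have h4' : (μ[D k | ℱ k]) ω ≤ -α := h4 (lt_of_le_of_lt ha hXk)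
    have := le_trans h2 (le_of_eq h3)
    nlinarith [this]
  -- induction
  have key : ∀ k, ∫ ω, (A k).indicator (f k) ω ∂μ ≤ Real.exp (η * x₀) * ρ ^ k := by
    intro k
    induction k with
    | zero =>
      have hle : ∀ ω, (A 0).indicator (f 0) ω ≤ Real.exp (η * x₀) := by
        intro ω
        by_cases h : ω ∈ A 0
        · rw [Set.indicator_of_mem h]; simp [hfdef, hX0 ω]
        · rw [Set.indicator_of_notMem h]; positivity
      calc ∫ ω, (A 0).indicator (f 0) ω ∂μ ≤ ∫ _, Real.exp (η * x₀) ∂μ :=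
            integral_mono ((hfint 0).indicator (hAm 0)) (integrable_const _) hle
        _ = Real.exp (η * x₀) * ρ ^ 0 := by simp
    | succ k ih =>
      have hWsm : StronglyMeasurable[ℱ k] ((A k).indicator (f k)) :=
        ((Real.measurable_exp.comp (((hXadapted k).const_mul η))).stronglyMeasurable).indicator
          (hAmF k)
      have hWint : Integrable ((A k).indicator (f k)) μ := (hfint k).indicator (hAm k)
      have hWbd : ∀ᵐ ω ∂μ, ‖(A k).indicator (f k) ω‖ ≤ Real.exp (η * (x₀ + k * ν)) := by
        filter_upwards [hbd] with ω hω
        by_cases h : ω ∈ A k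
        · rw [Set.indicator_of_mem h, Real.norm_eq_abs, abs_of_pos (hfpos k ω)]
          exact Real.exp_le_exp.2 (mul_le_mul_of_nonneg_left (hω k) hη0.le)
        · rw [Set.indicator_of_notMem h]; simp; positivity
      have hsub : A (k + 1) ⊆ A k := fun ω hω t ht => hω t (ht.trans (Nat.le_succ k))
      have s1 : ∫ ω, (A (k + 1)).indicator (f (k + 1)) ω ∂μ ≤
          ∫ ω, (A k).indicator (f (k + 1)) ω ∂μ :=
        integral_mono ((hfint (k + 1)).indicator (hAm (k + 1)))
          ((hfint (k + 1)).indicator (hAm k))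
          (Set.indicator_le_indicator_of_subset hsub (fun ω => (hfpos (k + 1) ω).le))
      have s2 : (A k).indicator (f (k + 1)) = (A k).indicator (f k) * G k := by
        funext ω
        by_cases h : ω ∈ A k
        · simp only [Pi.mul_apply, Set.indicator_of_mem h, hfdef, hGdef, hDdef]
          rw [← Real.exp_add]
          congr 1
          ring
        · simp [Set.indicator_of_notMem h]
      have hWGint : Integrable ((A k).indicator (f k) * G k) μ :=
        (hGint k).bdd_mul ((hWsm.mono (ℱ.le k)).aestronglyMeasurable) hWbd
      haveI : SigmaFinite (μ.trim (ℱ.le k)) := by infer_instance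
      have s3 : ∫ ω, ((A k).indicator (f k) * G k) ω ∂μ =
          ∫ ω, (μ[(A k).indicator (f k) * G k | ℱ k]) ω ∂μ :=
        (integral_condExp (ℱ.le k)).symm
      have s4 : μ[(A k).indicator (f k) * G k | ℱ k] =ᵐ[μ]
          (A k).indicator (f k) * μ[G k | ℱ k] :=
        condExp_stronglyMeasurable_mul_of_bound (ℱ.le k) hWsm (hGint k) _ hWbd
      have s5 : ∫ ω, ((A k).indicator (f k) * μ[G k | ℱ k]) ω ∂μ ≤
          ∫ ω, ρ * (A k).indicator (f k) ω ∂μ := by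
        refine integral_mono_ae
          (integrable_condExp.bdd_mul ((hWsm.mono (ℱ.le k)).aestronglyMeasurable) hWbd)
          (hWint.const_mul ρ) ?_
        filter_upwards [hcond k] with ω hω
        by_cases h : ω ∈ A k
        · have hXa : a < X k ω := h k le_rfl
          simp only [Pi.mul_apply, Set.indicator_of_mem h]
          rw [mul_comm ρ _]
          exact mul_le_mul_of_nonneg_left (hω hXa) (hfpos k ω).le
        · simp [Set.indicator_of_notMem h]
      calc ∫ ω, (A (k + 1)).indicator (f (k + 1)) ω ∂μ
          ≤ ∫ ω, (A k).indicator (f (k + 1)) ω ∂μ := s1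
        _ = ∫ ω, ((A k).indicator (f k) * G k) ω ∂μ := by rw [s2]
        _ = ∫ ω, (μ[(A k).indicator (f k) * G k | ℱ k]) ω ∂μ := s3
        _ = ∫ ω, ((A k).indicator (f k) * μ[G k | ℱ k]) ω ∂μ := integral_congr_ae s4
        _ ≤ ∫ ω, ρ * (A k).indicator (f k) ω ∂μ := s5
        _ = ρ * ∫ ω, (A k).indicator (f k) ω ∂μ := integral_const_mul _ _
        _ ≤ ρ * (Real.exp (η * x₀) * ρ ^ k) := mul_le_mul_of_nonneg_left ih hρ0.le
        _ = Real.exp (η * x₀) * ρ ^ (k + 1) := by ring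
  -- conclusion
  intro k
  rw [hTset k]
  have h1 : (μ (A k)).toReal * Real.exp (η * a) ≤ ∫ ω, (A k).indicator (f k) ω ∂μ := by
    have heq : ∫ ω, (A k).indicator (fun _ => Real.exp (η * a)) ω ∂μ =
        (μ (A k)).toReal * Real.exp (η * a) := by
      rw [integral_indicator_const _ (hAm k), smul_eq_mul, measureReal_def]
    rw [← heq]
    refine integral_mono ((integrable_const _).indicator (hAm k))
      ((hfint k).indicator (hAm k)) ?_
    intro ω
    by_cases h : ω ∈ A k
    · rw [Set.indicator_of_mem h, Set.indicator_of_mem h]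
      exact Real.exp_le_exp.2 (mul_le_mul_of_nonneg_left (h k le_rfl).le hη0.le)
    · rw [Set.indicator_of_notMem h, Set.indicator_of_notMem h]
  rw [mul_sub, Real.exp_sub, div_mul_eq_mul_div, le_div_iff₀ (Real.exp_pos _)]
  exact le_trans h1 (key k)
end

section
/- Let (X_t)_{t∈ℕ} be as in the drift setting. Then for every t ≥ 0, almost surely E[e^{η X_{t+1}} | F_t] ≤ e^{ν + ηB} + ρ e^{η X_t}. -/
open MeasureTheory Real Finset Nat

lemma exp_tsum (x : ℝ) : Real.exp x = ∑' n : ℕ, x ^ n / n ! := by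
  rw [Real.exp_eq_exp_ℝ, NormedSpace.exp_eq_tsum_div]

lemma exp_sub_linear_tsum (x : ℝ) :
    Real.exp x - x - 1 = ∑' n : ℕ, x ^ (n + 2) / (n + 2)! := by
  have hs := Real.summable_pow_div_factorial x
  have h := Summable.sum_add_tsum_nat_add 2 hs
  rw [exp_tsum x, ← h]
  simp [Finset.sum_range_succ]
  ring

lemma g_quad {l v : ℝ} (hl0 : 0 ≤ l) (hl1 : l ≤ 1) (hv : 0 ≤ v) :
    Real.exp (l * v) - l * v - 1 ≤ l ^ 2 * (Real.exp v - v - 1) := by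
  rw [exp_sub_linear_tsum, exp_sub_linear_tsum, ← tsum_mul_left]
  refine ((summable_nat_add_iff 2).2 (Real.summable_pow_div_factorial (l * v))).tsum_le_tsum
    (fun n => ?_)
    (((summable_nat_add_iff 2).2 (Real.summable_pow_div_factorial v)).mul_left _)
  rw [mul_pow, mul_div_assoc]
  exact mul_le_mul_of_nonneg_right (pow_le_pow_of_le_one hl0 hl1 (by omega))
    (by positivity)

lemma exp_le_quad_of_nonpos {x : ℝ} (hx : x ≤ 0) : Real.exp x ≤ 1 + x + x ^ 2 / 2 := by
  have hu0 : (0:ℝ) ≤ -x := neg_nonneg.2 hx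
  have hcub : 1 + (-x) + (-x) ^ 2 / 2 + (-x) ^ 3 / 6 ≤ Real.exp (-x) := by
    have h := Real.sum_le_exp_of_nonneg hu0 4
    simp [Finset.sum_range_succ, Nat.factorial] at h
    nlinarith [h]
  have hq : (0:ℝ) < 1 + x + x ^ 2 / 2 := by nlinarith [sq_nonneg (x + 1)]
  have h1 : Real.exp x * Real.exp (-x) = 1 := by
    rw [← Real.exp_add]; simp
  have h2 : (1:ℝ) ≤ (1 + x + x ^ 2 / 2) * (1 + (-x) + (-x) ^ 2 / 2 + (-x) ^ 3 / 6) := by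
    nlinarith [pow_nonneg hu0 3, pow_nonneg hu0 4, pow_nonneg hu0 5]
  have h3 : (1:ℝ) ≤ (1 + x + x ^ 2 / 2) * Real.exp (-x) :=
    h2.trans (mul_le_mul_of_nonneg_left hcub hq.le)
  nlinarith [Real.exp_pos (-x), Real.exp_pos x]

lemma key_pointwise {y ν η : ℝ} (hν : 0 < ν) (hy : |y| ≤ ν) (hη0 : 0 < η) (hη1 : η ≤ 1) :
    Real.exp (η * y) ≤ 1 + η * y + η ^ 2 * (Real.exp ν - ν - 1) := by
  have hc : ν ^ 2 / 2 ≤ Real.exp ν - ν - 1 := by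
    have := Real.quadratic_le_exp_of_nonneg hν.le; linarith
  have hy2 : y ^ 2 ≤ ν ^ 2 := sq_le_sq' (abs_le.1 hy).1 (abs_le.1 hy).2
  rcases le_or_gt 0 y with hy0 | hy0
  · set l := η * y / ν with hl
    have hl0 : 0 ≤ l := by positivity
    have hl1 : l ≤ 1 := by
      rw [hl, div_le_one hν]
      calc η * y ≤ 1 * ν :=
            mul_le_mul hη1 (by linarith [(abs_le.1 hy).2]) hy0 zero_le_one
        _ = ν := one_mul ν
    have h := g_quad hl0 hl1 hν.le
    have hlv : l * ν = η * y := div_mul_cancel₀ _ hν.ne'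
    rw [hlv] at h
    have hl2 : l ^ 2 ≤ η ^ 2 := by
      rw [hl, div_pow, div_le_iff₀ (by positivity), mul_pow]
      nlinarith
    nlinarith [Real.exp_pos ν]
  · have hle : η * y ≤ 0 := by nlinarith
    have h := exp_le_quad_of_nonpos hle
    have : (η * y) ^ 2 / 2 ≤ η ^ 2 * (Real.exp ν - ν - 1) := by nlinarith
    linarith

/-- One-step conditional exponential drift bound: for a process with bounded
increments and negative drift above level `B`, almost surely
`E[e^{η X_{t+1}} | F_t] ≤ e^{ν + ηB} + ρ e^{η X_t}`. -/
theorem stmt_6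
    {Ω : Type*} {m : MeasurableSpace Ω} {μ : Measure Ω} [IsProbabilityMeasure μ]
    (ℱ : Filtration ℕ m)
    (X : ℕ → Ω → ℝ) (hXadapted : Adapted ℱ X)
    (ν α B η ρ : ℝ)
    (hν : 0 < ν)
    (hinc : ∀ t : ℕ, ∀ᵐ ω ∂μ, |X (t + 1) ω - X t ω| ≤ ν)
    (hα : 0 < α) (hB : 0 < B)
    (hdrift : ∀ t : ℕ, ∀ᵐ ω ∂μ,
      X t ω > B → (μ[fun ω' => X (t + 1) ω' - X t ω' | ℱ t]) ω ≤ -α)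
    (hη0 : 0 < η) (hη1 : η ≤ min 1 (α / (2 * (Real.exp ν - ν - 1))))
    (hρ : ρ = 1 - η * α / 2) (hρ0 : 0 < ρ) (hρ1 : ρ < 1) :
    ∀ t : ℕ, ∀ᵐ ω ∂μ,
      (μ[fun ω' => Real.exp (η * X (t + 1) ω') | ℱ t]) ω ≤
        Real.exp (ν + η * B) + ρ * Real.exp (η * X t ω) := by
  intro t
  have hc_pos : (0:ℝ) < Real.exp ν - ν - 1 := by
    have := Real.quadratic_le_exp_of_nonneg hν.le
    nlinarith
  set c : ℝ := Real.exp ν - ν - 1 with hc_def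
  have hη_le1 : η ≤ 1 := le_trans hη1 (min_le_left _ _)
  have hηc : η * c ≤ α / 2 := by
    have h2 : η ≤ α / (2 * c) := le_trans hη1 (min_le_right _ _)
    rw [le_div_iff₀ (by positivity)] at h2
    nlinarith
  by_cases hint : Integrable (fun ω' => Real.exp (η * X (t + 1) ω')) μ
  swap
  · rw [condExp_of_not_integrable hint]
    filter_upwards with ω
    simp only [Pi.zero_apply]
    positivity
  set Y : Ω → ℝ := fun ω => X (t + 1) ω - X t ω with hYdef
  set f : Ω → ℝ := fun ω => Real.exp (η * X t ω) with hfdef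
  set g : Ω → ℝ := fun ω => Real.exp (η * Y ω) with hgdef
  have hXm1 : StronglyMeasurable (X (t + 1)) := ((hXadapted (t + 1)).mono (ℱ.le _) le_rfl).stronglyMeasurable
  have hXm0 : StronglyMeasurable (X t) := ((hXadapted t).mono (ℱ.le _) le_rfl).stronglyMeasurable
  have hYm : StronglyMeasurable Y := hXm1.sub hXm0
  have hfm : StronglyMeasurable[ℱ t] f :=
    Real.continuous_exp.comp_stronglyMeasurable ((hXadapted t).const_mul η).stronglyMeasurable
  have hgm : StronglyMeasurable g :=
    Real.continuous_exp.comp_stronglyMeasurable (hYm.const_mul η)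
  have hYb : ∀ᵐ ω ∂μ, |Y ω| ≤ ν := hinc t
  have hY_int : Integrable Y μ := by
    refine (integrable_const ν).mono' hYm.aestronglyMeasurable ?_
    filter_upwards [hYb] with ω h
    simpa using h
  have hg_int : Integrable g μ := by
    refine (integrable_const (Real.exp ν)).mono' hgm.aestronglyMeasurable ?_
    filter_upwards [hYb] with ω h
    rw [Real.norm_eq_abs, abs_of_pos (Real.exp_pos _)]
    apply Real.exp_le_exp.2
    have h1 : η * Y ω ≤ η * ν := mul_le_mul_of_nonneg_left (abs_le.1 h).2 hη0.le
    nlinarith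
  have hfg : (fun ω' => Real.exp (η * X (t + 1) ω')) = f * g := by
    funext ω
    simp only [hfdef, hgdef, hYdef, Pi.mul_apply, ← Real.exp_add]
    ring_nf
  have hpull : μ[f * g | ℱ t] =ᵐ[μ] f * μ[g | ℱ t] :=
    condExp_mul_of_stronglyMeasurable_left hfm (hfg ▸ hint) hg_int
  have hgle : g ≤ᵐ[μ] fun _ => Real.exp ν := by
    filter_upwards [hYb] with ω h
    apply Real.exp_le_exp.2
    have h1 : η * Y ω ≤ η * ν := mul_le_mul_of_nonneg_left (abs_le.1 h).2 hη0.le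
    nlinarith
  have hA : μ[g | ℱ t] ≤ᵐ[μ] fun _ => Real.exp ν := by
    have h := condExp_mono (m := (ℱ t : MeasurableSpace Ω)) hg_int (integrable_const (Real.exp ν)) hgle
    rwa [condExp_const (ℱ.le t)] at h
  set p9 : Ω → ℝ := (fun _ => 1 + η ^ 2 * c) + η • Y with hp9def
  have hp9_int : Integrable p9 μ := (integrable_const _).add (hY_int.smul η)
  have hgle2 : g ≤ᵐ[μ] p9 := by
    filter_upwards [hYb] with ω h
    have := key_pointwise hν h hη0 hη_le1
    rw [← hc_def] at this
    simp only [hgdef, hp9def, Pi.add_apply, Pi.smul_apply, smul_eq_mul]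
    linarith
  have hB2 : μ[g | ℱ t] ≤ᵐ[μ] μ[p9 | ℱ t] := condExp_mono hg_int hp9_int hgle2
  have hp9_eq : μ[p9 | ℱ t] =ᵐ[μ]
      fun ω => 1 + η ^ 2 * c + η * (μ[Y | ℱ t]) ω := by
    refine (condExp_add (μ := μ) (m := ℱ t) (integrable_const _)
      (hY_int.smul η)).trans ?_
    have h1 := condExp_const (μ := μ) (ℱ.le t) (1 + η ^ 2 * c)
    have h2 := condExp_smul (μ := μ) (m := ℱ t) η Y
    filter_upwards [h2] with ω h2ω
    simp only [Pi.add_apply, h2ω, Pi.smul_apply, smul_eq_mul, h1]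
  rw [hfg]
  filter_upwards [hpull, hA, hB2.trans_eq hp9_eq, hdrift t] with ω hpω hAω hBω hdω
  rw [hpω]
  simp only [Pi.mul_apply]
  have hf_pos : 0 < f ω := Real.exp_pos _
  rcases le_or_gt (X t ω) B with hcase | hcase
  · have hfB : f ω ≤ Real.exp (η * B) :=
      Real.exp_le_exp.2 (mul_le_mul_of_nonneg_left hcase hη0.le)
    have hmul : Real.exp (η * B) * Real.exp ν = Real.exp (ν + η * B) := by
      rw [← Real.exp_add]; ring_nf
    have h1 : f ω * (μ[g | ℱ t]) ω ≤ f ω * Real.exp ν :=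
      mul_le_mul_of_nonneg_left hAω hf_pos.le
    have h2 : f ω * Real.exp ν ≤ Real.exp (ν + η * B) := by
      rw [← hmul]
      exact mul_le_mul_of_nonneg_right hfB (Real.exp_pos _).le
    nlinarith [mul_pos hρ0 hf_pos]
  · have hW : (μ[Y | ℱ t]) ω ≤ -α := hdω hcase
    have hZ : (μ[g | ℱ t]) ω ≤ ρ := by
      have : η * (μ[Y | ℱ t]) ω ≤ η * (-α) := mul_le_mul_of_nonneg_left hW hη0.le
      have hq : η ^ 2 * c ≤ η * (α / 2) := by nlinarith
      rw [hρ]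
      calc (μ[g | ℱ t]) ω ≤ 1 + η ^ 2 * c + η * (μ[Y | ℱ t]) ω := hBω
        _ ≤ 1 + η * (α / 2) + η * (-α) := by linarith
        _ = 1 - η * α / 2 := by ring
    have h1 : f ω * (μ[g | ℱ t]) ω ≤ f ω * ρ :=
      mul_le_mul_of_nonneg_left hZ hf_pos.le
    nlinarith [Real.exp_pos (ν + η * B)]
end

section
/- Under the Boltzmann policy setting, the total variation distance between the two softmax distributions satisfies ‖P̂ − P*‖_TV ≤ (|A|²/2) · (e^{2ε/τ} − 1)/(e^{2ε/τ} + 1). -/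
open Real

lemma pair_abs_le {R u v : ℝ} (hR : 1 ≤ R) (huv : u ≤ R * v) (hvu : v ≤ R * u) :
    |u - v| ≤ (R - 1) / (R + 1) * (u + v) := by
  have hR1 : (0:ℝ) < R + 1 := by linarith
  rw [abs_sub_le_iff]
  constructor <;>
  · rw [div_mul_eq_mul_div, le_div_iff₀ hR1]
    nlinarith

/-- Total variation bound between two softmax (Boltzmann) distributions built
from `Q`-functions that are `ε`-close:
`‖P̂ − P*‖_TV ≤ (|A|²/2)·(e^{2ε/τ} − 1)/(e^{2ε/τ} + 1)`. -/
theorem stmt_7 {A : Type*} [Fintype A] [Nonempty A]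
    (τ ε : ℝ) (hτ : 0 < τ) (hε : 0 ≤ ε)
    (Qh Qs : A → ℝ) (hQ : ∀ a, |Qh a - Qs a| ≤ ε)
    (Ph Ps : A → ℝ)
    (hPh : ∀ a, Ph a = Real.exp (Qh a / τ) / ∑ a', Real.exp (Qh a' / τ))
    (hPs : ∀ a, Ps a = Real.exp (Qs a / τ) / ∑ a', Real.exp (Qs a' / τ)) :
    (1 / 2) * ∑ a, |Ph a - Ps a| ≤
      ((Fintype.card A : ℝ) ^ 2 / 2) *
        ((Real.exp (2 * ε / τ) - 1) / (Real.exp (2 * ε / τ) + 1)) := by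
  set R := Real.exp (2 * ε / τ) with hRdef
  have hR1 : 1 ≤ R := by
    rw [hRdef, ← Real.exp_zero]
    exact Real.exp_le_exp.mpr (by positivity)
  set c := (R - 1) / (R + 1) with hcdef
  have hc0 : 0 ≤ c := div_nonneg (by linarith) (by linarith)
  set x : A → ℝ := fun a => Real.exp (Qh a / τ) with hxdef
  set y : A → ℝ := fun a => Real.exp (Qs a / τ) with hydef
  have hx : ∀ a, 0 < x a := fun a => Real.exp_pos _
  have hy : ∀ a, 0 < y a := fun a => Real.exp_pos _
  set X := ∑ a, x a with hXdef
  set Y := ∑ a, y a with hYdef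
  have hXpos : 0 < X := Finset.sum_pos (fun a _ => hx a) Finset.univ_nonempty
  have hYpos : 0 < Y := Finset.sum_pos (fun a _ => hy a) Finset.univ_nonempty
  have hXY : (0:ℝ) < X * Y := mul_pos hXpos hYpos
  -- pairwise ratio bounds
  have key : ∀ a b, x a * y b ≤ R * (y a * x b) := by
    intro a b
    have h1 : x a ≤ Real.exp (ε / τ) * y a := by
      rw [hxdef, hydef]
      simp only [← Real.exp_add]
      apply Real.exp_le_exp.mpr
      have := (abs_le.mp (hQ a)).2
      rw [← add_div]
      apply div_le_div_of_nonneg_right ?_ hτ.le |>.trans_eq rfl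
      · linarith
    have h2 : y b ≤ Real.exp (ε / τ) * x b := by
      rw [hxdef, hydef]
      simp only [← Real.exp_add]
      apply Real.exp_le_exp.mpr
      have := (abs_le.mp (hQ b)).1
      rw [← add_div]
      apply div_le_div_of_nonneg_right ?_ hτ.le |>.trans_eq rfl
      · linarith
    have hee : Real.exp (ε / τ) * Real.exp (ε / τ) = R := by
      rw [← Real.exp_add, hRdef]
      ring_nf
    calc x a * y b ≤ (Real.exp (ε / τ) * y a) * (Real.exp (ε / τ) * x b) := by
          apply mul_le_mul h1 h2 (hy b).le (by positivity)
      _ = R * (y a * x b) := by rw [← hee]; ring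
  -- per-element bound
  have step : ∀ a, |Ph a - Ps a| ≤ c * (x a * Y + y a * X) / (X * Y) := by
    intro a
    have heq : Ph a - Ps a = (x a * Y - y a * X) / (X * Y) := by
      rw [hPh a, hPs a]
      field_simp
      simp only [hxdef, hydef]
      ring
    rw [heq, abs_div, abs_of_pos hXY]
    apply div_le_div_of_nonneg_right ?_ hXY.le |>.trans_eq rfl
    have hsum : x a * Y - y a * X = ∑ b, (x a * y b - y a * x b) := by
      rw [Finset.sum_sub_distrib, ← Finset.mul_sum, ← Finset.mul_sum]
    rw [hsum]
    calc |∑ b, (x a * y b - y a * x b)| ≤ ∑ b, |x a * y b - y a * x b| :=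
          Finset.abs_sum_le_sum_abs _ _
      _ ≤ ∑ b, c * (x a * y b + y a * x b) := by
          apply Finset.sum_le_sum
          intro b _
          exact pair_abs_le hR1 (key a b) (by nlinarith [key b a])
      _ = c * (x a * Y + y a * X) := by
          rw [← Finset.mul_sum, Finset.sum_add_distrib, ← Finset.mul_sum, ← Finset.mul_sum]
  -- sum the bound
  have hsum2 : ∑ a, |Ph a - Ps a| ≤ 2 * c := by
    calc ∑ a, |Ph a - Ps a| ≤ ∑ a, c * (x a * Y + y a * X) / (X * Y) :=
          Finset.sum_le_sum (fun a _ => step a)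
      _ = 2 * c := by
          rw [← Finset.sum_div, ← Finset.mul_sum, Finset.sum_add_distrib,
            ← Finset.sum_mul, ← Finset.sum_mul, ← hXdef, ← hYdef]
          field_simp
          ring
  have hcard : 1 ≤ Fintype.card A := Fintype.card_pos
  rcases eq_or_lt_of_le hcard with h1 | h2
  · -- card = 1 : both distributions are trivial
    obtain ⟨a0, ha0⟩ := Fintype.card_eq_one_iff.mp h1.symm
    have hsx : X = x a0 := by
      rw [hXdef]
      exact Finset.sum_eq_single_of_mem a0 (Finset.mem_univ a0)
        (fun b _ hb => absurd (ha0 b) hb)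
    have hsy : Y = y a0 := by
      rw [hYdef]
      exact Finset.sum_eq_single_of_mem a0 (Finset.mem_univ a0)
        (fun b _ hb => absurd (ha0 b) hb)
    have hzero : ∀ a, |Ph a - Ps a| = 0 := by
      intro a
      rw [ha0 a, hPh a0, hPs a0]
      show |x a0 / X - y a0 / Y| = 0
      rw [hsx, hsy, div_self (hx a0).ne', div_self (hy a0).ne', sub_self, abs_zero]
    rw [Finset.sum_congr rfl (fun a _ => hzero a), Finset.sum_const, smul_zero, mul_zero]
    exact mul_nonneg (by positivity) hc0
  · -- card ≥ 2
    have hn : (2:ℝ) ≤ (Fintype.card A : ℝ) := by exact_mod_cast h2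
    have : (1:ℝ) ≤ (Fintype.card A : ℝ) ^ 2 / 2 := by nlinarith
    calc (1 / 2) * ∑ a, |Ph a - Ps a| ≤ (1 / 2) * (2 * c) := by linarith
      _ = c := by ring
      _ ≤ ((Fintype.card A : ℝ) ^ 2 / 2) * c := le_mul_of_one_le_left hc0 this
end

section
/- Under the Boltzmann policy setting, for every a ∈ A the pointwise bound |P̂(a) − P*(a)| ≤ |A| · (e^{2ε/τ} − 1)/(e^{2ε/τ} + 1) holds. -/
open Real

/-- Pointwise bound between two softmax (Boltzmann) distributions built from
`Q`-functions that are `ε`-close: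
`|P̂(a) − P*(a)| ≤ |A|·(e^{2ε/τ} − 1)/(e^{2ε/τ} + 1)` for every action `a`. -/
theorem stmt_8 {A : Type*} [Fintype A] [Nonempty A]
    (τ ε : ℝ) (hτ : 0 < τ) (hε : 0 ≤ ε)
    (Qh Qs : A → ℝ) (hQ : ∀ a, |Qh a - Qs a| ≤ ε)
    (Ph Ps : A → ℝ)
    (hPh : ∀ a, Ph a = Real.exp (Qh a / τ) / ∑ a', Real.exp (Qh a' / τ))
    (hPs : ∀ a, Ps a = Real.exp (Qs a / τ) / ∑ a', Real.exp (Qs a' / τ)) :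
    ∀ a, |Ph a - Ps a| ≤
      (Fintype.card A : ℝ) *
        ((Real.exp (2 * ε / τ) - 1) / (Real.exp (2 * ε / τ) + 1)) := by
  intro a
  set c : ℝ := Real.exp (2 * ε / τ) with hc
  have hc1 : 1 ≤ c := by
    rw [hc, show (1:ℝ) = Real.exp 0 from (Real.exp_zero).symm]
    exact Real.exp_le_exp.mpr (by positivity)
  have hcp : (0:ℝ) < c + 1 := by linarith
  have hr0 : 0 ≤ (c - 1) / (c + 1) := by
    apply div_nonneg <;> linarith
  -- key elementary lemma
  have key : ∀ u v : ℝ, u ≤ c * v → v ≤ c * u → |u - v| ≤ (c - 1) / (c + 1) * (u + v) := by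
    intro u v h1 h2
    rw [abs_le]
    constructor
    · rw [div_mul_eq_mul_div, neg_le, le_div_iff₀ hcp]
      nlinarith
    · rw [div_mul_eq_mul_div, le_div_iff₀ hcp]
      nlinarith
  -- case card = 1
  rcases le_or_gt (Fintype.card A) 1 with hcard | hcard
  · have : Subsingleton A := Fintype.card_le_one_iff_subsingleton.mp hcard
    have hsum : ∀ Q : A → ℝ, (∑ a', Real.exp (Q a' / τ)) = Real.exp (Q a / τ) := by
      intro Q
      rw [Fintype.sum_subsingleton _ a]
    have h1 : Ph a = 1 := by
      rw [hPh, hsum]; exact div_self (Real.exp_pos _).ne'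
    have h2 : Ps a = 1 := by
      rw [hPs, hsum]; exact div_self (Real.exp_pos _).ne'
    rw [h1, h2, sub_self, abs_zero]
    positivity
  · -- general case, card ≥ 2
    have hcard2 : (2:ℝ) ≤ Fintype.card A := by exact_mod_cast hcard
    set Sh : ℝ := ∑ a', Real.exp (Qh a' / τ) with hSh
    set Ss : ℝ := ∑ a', Real.exp (Qs a' / τ) with hSs
    clear_value Sh Ss
    have hShpos : 0 < Sh := hSh ▸ Finset.sum_pos (fun i _ => Real.exp_pos _) Finset.univ_nonempty
    have hSspos : 0 < Ss := hSs ▸ Finset.sum_pos (fun i _ => Real.exp_pos _) Finset.univ_nonempty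
    have hdiff : Ph a - Ps a =
        (Real.exp (Qh a / τ) * Ss - Real.exp (Qs a / τ) * Sh) / (Sh * Ss) := by
      rw [hPh, hPs]
      field_simp
    -- bound each term
    have termbd : ∀ a' : A,
        |Real.exp (Qh a / τ) * Real.exp (Qs a' / τ)
          - Real.exp (Qs a / τ) * Real.exp (Qh a' / τ)| ≤
        (c - 1) / (c + 1) * (Real.exp (Qh a / τ) * Real.exp (Qs a' / τ)
          + Real.exp (Qs a / τ) * Real.exp (Qh a' / τ)) := by
      intro a'
      apply key
      · rw [hc, ← Real.exp_add, ← Real.exp_add, ← Real.exp_add]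
        apply Real.exp_le_exp.mpr
        have h1 := abs_le.mp (hQ a)
        have h2 := abs_le.mp (hQ a')
        rw [← add_div, ← add_div, ← add_div, div_le_div_iff₀ hτ hτ]
        nlinarith
      · rw [hc, ← Real.exp_add, ← Real.exp_add, ← Real.exp_add]
        apply Real.exp_le_exp.mpr
        have h1 := abs_le.mp (hQ a)
        have h2 := abs_le.mp (hQ a')
        rw [← add_div, ← add_div, ← add_div, div_le_div_iff₀ hτ hτ]
        nlinarith
    -- numerator bound
    have hnum : |Real.exp (Qh a / τ) * Ss - Real.exp (Qs a / τ) * Sh| ≤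
        (c - 1) / (c + 1) * (Real.exp (Qh a / τ) * Ss + Real.exp (Qs a / τ) * Sh) := by
      rw [hSh, hSs, Finset.mul_sum, Finset.mul_sum, ← Finset.sum_sub_distrib,
        ← Finset.sum_add_distrib, Finset.mul_sum]
      exact (Finset.abs_sum_le_sum_abs _ _).trans
        (Finset.sum_le_sum fun a' _ => termbd a')
    have hxh : Real.exp (Qh a / τ) ≤ Sh := by
      rw [hSh]
      exact Finset.single_le_sum (f := fun a' => Real.exp (Qh a' / τ)) (fun i _ => (Real.exp_pos _).le) (Finset.mem_univ a)
    have hxs : Real.exp (Qs a / τ) ≤ Ss := by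
      rw [hSs]
      exact Finset.single_le_sum (f := fun a' => Real.exp (Qs a' / τ)) (fun i _ => (Real.exp_pos _).le) (Finset.mem_univ a)
    have hfinal : |Ph a - Ps a| ≤ (c - 1) / (c + 1) * 2 := by
      rw [hdiff, abs_div, abs_of_pos (by positivity : (0:ℝ) < Sh * Ss),
        div_le_iff₀ (by positivity : (0:ℝ) < Sh * Ss)]
      calc |Real.exp (Qh a / τ) * Ss - Real.exp (Qs a / τ) * Sh|
          ≤ (c - 1) / (c + 1) * (Real.exp (Qh a / τ) * Ss + Real.exp (Qs a / τ) * Sh) := hnum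
        _ ≤ (c - 1) / (c + 1) * 2 * (Sh * Ss) := by
            rw [mul_assoc]
            refine mul_le_mul_of_nonneg_left ?_ hr0
            nlinarith [mul_le_mul_of_nonneg_right hxh hSspos.le,
              mul_le_mul_of_nonneg_right hxs hShpos.le]
    calc |Ph a - Ps a| ≤ (c - 1) / (c + 1) * 2 := hfinal
      _ ≤ (Fintype.card A : ℝ) * ((c - 1) / (c + 1)) := by nlinarith
end

section
/- Under the Boltzmann policy setting with argmax set A* and gap Δ, the total variation distance between the softmax distribution P* and the uniform-over-argmax policy π* satisfies ‖P* − π*‖_TV ≤ (|A| − 1) e^{−Δ/τ}. -/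
open Real

/-- Total variation bound between the softmax distribution `P*` of `Q*` and the
uniform-over-argmax policy `π*`: `‖P* − π*‖_TV ≤ (|A| − 1) e^{−Δ/τ}`, where
`Δ` is the gap between the maximal value of `Q*` and its maximal value outside
the argmax set `A*` (assumed to be a proper subset of `A`). -/
theorem stmt_9 {A : Type*} [Fintype A] [Nonempty A] [DecidableEq A]
    (τ : ℝ) (hτ : 0 < τ) (Qs : A → ℝ)
    (Astar : Finset A)
    (hAstar : ∀ a, a ∈ Astar ↔ ∀ b, Qs b ≤ Qs a)
    (hne : (Astarᶜ).Nonempty)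
    (Δ : ℝ)
    (hΔ : Δ = Finset.univ.sup' Finset.univ_nonempty Qs - (Astarᶜ).sup' hne Qs)
    (Ps πs : A → ℝ)
    (hPs : ∀ a, Ps a = Real.exp (Qs a / τ) / ∑ a', Real.exp (Qs a' / τ))
    (hπ : ∀ a, πs a = if a ∈ Astar then 1 / (Astar.card : ℝ) else 0) :
    (1 / 2) * ∑ a, |Ps a - πs a| ≤
      ((Fintype.card A : ℝ) - 1) * Real.exp (-Δ / τ) := by
  obtain ⟨a0, -, ha0⟩ := Finset.exists_max_image Finset.univ Qs Finset.univ_nonempty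
  have ha0' : a0 ∈ Astar := (hAstar a0).2 fun b => ha0 b (Finset.mem_univ b)
  set M := Qs a0 with hM
  have hsup : Finset.univ.sup' Finset.univ_nonempty Qs = M :=
    le_antisymm (Finset.sup'_le _ _ fun b _ => ha0 b (Finset.mem_univ b))
      (Finset.le_sup' Qs (Finset.mem_univ a0))
  set S := ∑ a', Real.exp (Qs a' / τ) with hS
  have hSpos : 0 < S := Finset.sum_pos (fun i _ => Real.exp_pos _) Finset.univ_nonempty
  have hSge : Real.exp (M / τ) ≤ S :=
    Finset.single_le_sum (f := fun a' => Real.exp (Qs a' / τ))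
      (fun i _ => (Real.exp_pos _).le) (Finset.mem_univ a0)
  have hPsnn : ∀ a, 0 ≤ Ps a := fun a => by rw [hPs a]; positivity
  have hk : 0 < (Astar.card : ℝ) := by
    exact_mod_cast Finset.card_pos.2 ⟨a0, ha0'⟩
  have hQeq : ∀ a ∈ Astar, Qs a = M := fun a ha =>
    le_antisymm (ha0 a (Finset.mem_univ a)) ((hAstar a).1 ha a0)
  have hcardS : (Astar.card : ℝ) * Real.exp (M / τ) ≤ S := by
    calc (Astar.card : ℝ) * Real.exp (M / τ)
        = ∑ a ∈ Astar, Real.exp (Qs a / τ) := by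
          rw [Finset.sum_congr rfl fun a ha => by rw [hQeq a ha]]
          rw [Finset.sum_const, nsmul_eq_mul]
      _ ≤ S := Finset.sum_le_sum_of_subset_of_nonneg (Finset.subset_univ _)
          fun i _ _ => (Real.exp_pos _).le
  have hPle : ∀ a ∈ Astar, Ps a ≤ 1 / (Astar.card : ℝ) := by
    intro a ha
    rw [hPs a, hQeq a ha, div_le_div_iff₀ hSpos hk, one_mul, mul_comm]
    exact hcardS
  -- on Astar, |Ps - πs| = 1/k - Ps
  have habs1 : ∀ a ∈ Astar, |Ps a - πs a| = 1 / (Astar.card : ℝ) - Ps a := by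
    intro a ha
    rw [hπ a, if_pos ha, abs_of_nonpos (by linarith [hPle a ha])]
    ring
  have habs2 : ∀ a ∈ Astarᶜ, |Ps a - πs a| = Ps a := by
    intro a ha
    rw [hπ a, if_neg (Finset.mem_compl.1 ha), sub_zero, abs_of_nonneg (hPsnn a)]
  have hPsum : ∑ a, Ps a = 1 := by
    simp only [hPs]
    rw [← Finset.sum_div, ← hS, div_self hSpos.ne']
  have hsplit : ∑ a ∈ Astar, Ps a + ∑ a ∈ Astarᶜ, Ps a = 1 := by
    rw [Finset.sum_add_sum_compl]; exact hPsum
  have hsumAstar : ∑ a ∈ Astar, |Ps a - πs a| = ∑ a ∈ Astarᶜ, Ps a := by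
    rw [Finset.sum_congr rfl habs1, Finset.sum_sub_distrib, Finset.sum_const,
      nsmul_eq_mul]
    field_simp
    linarith
  -- bound on complement elements
  have hbound : ∀ a ∈ Astarᶜ, Ps a ≤ Real.exp (-Δ / τ) := by
    intro a ha
    have hQle : Qs a ≤ M - Δ := by
      have := Finset.le_sup' Qs ha
      rw [hΔ, hsup]; linarith
    rw [hPs a]
    calc Real.exp (Qs a / τ) / S ≤ Real.exp ((M - Δ) / τ) / Real.exp (M / τ) := by
          apply div_le_div₀ (Real.exp_pos _).le _ (Real.exp_pos _) hSge
          exact Real.exp_le_exp.2 (div_le_div_of_nonneg_right hQle hτ.le)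
      _ = Real.exp (-Δ / τ) := by
          rw [← Real.exp_sub]
          congr 1
          field_simp
          ring
  have hcompl_card : (Astarᶜ.card : ℝ) ≤ (Fintype.card A : ℝ) - 1 := by
    have h1 : Astarᶜ.card = Fintype.card A - Astar.card := Finset.card_compl _
    have h2 : 1 ≤ Astar.card := Finset.card_pos.2 ⟨a0, ha0'⟩
    have h3 : Astar.card ≤ Fintype.card A := Finset.card_le_univ _
    have : (Astarᶜ.card : ℕ) ≤ Fintype.card A - 1 := by omega
    calc (Astarᶜ.card : ℝ) ≤ ((Fintype.card A - 1 : ℕ) : ℝ) := by exact_mod_cast this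
      _ ≤ (Fintype.card A : ℝ) - 1 := by
          have h4 : 1 ≤ Fintype.card A := Fintype.card_pos
          rw [Nat.cast_sub h4]; simp
  have hsumcompl : ∑ a ∈ Astarᶜ, Ps a ≤ ((Fintype.card A : ℝ) - 1) * Real.exp (-Δ / τ) := by
    calc ∑ a ∈ Astarᶜ, Ps a ≤ ∑ _a ∈ Astarᶜ, Real.exp (-Δ / τ) :=
          Finset.sum_le_sum hbound
      _ = (Astarᶜ.card : ℝ) * Real.exp (-Δ / τ) := by
          rw [Finset.sum_const, nsmul_eq_mul]
      _ ≤ ((Fintype.card A : ℝ) - 1) * Real.exp (-Δ / τ) :=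
          mul_le_mul_of_nonneg_right hcompl_card (Real.exp_pos _).le
  have htot : ∑ a, |Ps a - πs a| = 2 * ∑ a ∈ Astarᶜ, Ps a := by
    rw [← Finset.sum_add_sum_compl Astar, hsumAstar, Finset.sum_congr rfl habs2]
    ring
  rw [htot]
  linarith
end

section
/- Under the Boltzmann policy setting with argmax set A* ≠ A and gap Δ, the total variation distance between the softmax distribution P̂ and the uniform-over-argmax policy π* satisfies ‖P̂ − π*‖_TV ≤ (|A|²/2) · (e^{2ε/τ} − 1)/(e^{2ε/τ} + 1) + (|A| − 1) e^{−Δ/τ}. -/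
open Real

lemma tanh_aux (p q E : ℝ) (hE : 1 ≤ E)
    (h1 : p ≤ E * q) (h2 : q ≤ E * p) :
    |p - q| ≤ (p + q) * ((E - 1) / (E + 1)) := by
  have hE0 : (0:ℝ) < E + 1 := by linarith
  rw [abs_sub_le_iff]
  constructor <;> rw [mul_div_assoc', le_div_iff₀ hE0] <;> nlinarith

set_option maxHeartbeats 1600000 in
/-- Total variation bound between the softmax distribution `P̂` of an
`ε`-accurate `Q`-estimate and the uniform-over-argmax policy `π*` of `Q*`:
`‖P̂ − π*‖_TV ≤ (|A|²/2)·(e^{2ε/τ} − 1)/(e^{2ε/τ} + 1) + (|A| − 1) e^{−Δ/τ}`. -/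
theorem stmt_10 {A : Type*} [Fintype A] [Nonempty A] [DecidableEq A]
    (τ ε : ℝ) (hτ : 0 < τ) (hε : 0 ≤ ε)
    (Qh Qs : A → ℝ) (hQ : ∀ a, |Qh a - Qs a| ≤ ε)
    (Astar : Finset A)
    (hAstar : ∀ a, a ∈ Astar ↔ ∀ b, Qs b ≤ Qs a)
    (hne : (Astarᶜ).Nonempty)
    (Δ : ℝ)
    (hΔ : Δ = Finset.univ.sup' Finset.univ_nonempty Qs - (Astarᶜ).sup' hne Qs)
    (Ph πs : A → ℝ)
    (hPh : ∀ a, Ph a = Real.exp (Qh a / τ) / ∑ a', Real.exp (Qh a' / τ))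
    (hπ : ∀ a, πs a = if a ∈ Astar then 1 / (Astar.card : ℝ) else 0) :
    (1 / 2) * ∑ a, |Ph a - πs a| ≤
      ((Fintype.card A : ℝ) ^ 2 / 2) *
          ((Real.exp (2 * ε / τ) - 1) / (Real.exp (2 * ε / τ) + 1)) +
        ((Fintype.card A : ℝ) - 1) * Real.exp (-Δ / τ) := by
  classical
  set c : ℝ := (Fintype.card A : ℝ) with hc
  set S : ℝ := ∑ a', Real.exp (Qs a' / τ) with hS
  set Sh : ℝ := ∑ a', Real.exp (Qh a' / τ) with hSh
  have hSpos : 0 < S := Finset.sum_pos (fun a _ => Real.exp_pos _) Finset.univ_nonempty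
  have hShpos : 0 < Sh := Finset.sum_pos (fun a _ => Real.exp_pos _) Finset.univ_nonempty
  set Ps : A → ℝ := fun a => Real.exp (Qs a / τ) / S with hPsdef
  have hPs0 : ∀ a, 0 ≤ Ps a := fun a => div_nonneg (Real.exp_pos _).le hSpos.le
  set E : ℝ := Real.exp (2 * ε / τ) with hE
  have hE1 : 1 ≤ E := Real.one_le_exp (by positivity)
  set K : ℝ := (E - 1) / (E + 1) with hK
  have hK0 : 0 ≤ K := div_nonneg (by linarith) (by linarith)
  -- basic exp comparisons
  have hub : ∀ a : A, Real.exp (Qh a / τ) ≤ Real.exp (ε / τ) * Real.exp (Qs a / τ) := by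
    intro a
    rw [← Real.exp_add]
    apply Real.exp_le_exp.2
    have := (abs_le.1 (hQ a)).2
    rw [← add_div]
    exact div_le_div_of_nonneg_right (by linarith) hτ.le
  have hlb : ∀ a : A, Real.exp (Qs a / τ) ≤ Real.exp (ε / τ) * Real.exp (Qh a / τ) := by
    intro a
    rw [← Real.exp_add]
    apply Real.exp_le_exp.2
    have := (abs_le.1 (hQ a)).1
    rw [← add_div]
    exact div_le_div_of_nonneg_right (by linarith) hτ.le
  have hSub : Sh ≤ Real.exp (ε / τ) * S := by
    rw [hSh, hS, Finset.mul_sum]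
    exact Finset.sum_le_sum fun a _ => hub a
  have hSlb : S ≤ Real.exp (ε / τ) * Sh := by
    rw [hS, hSh, Finset.mul_sum]
    exact Finset.sum_le_sum fun a _ => hlb a
  have hEsq : E = Real.exp (ε / τ) * Real.exp (ε / τ) := by
    rw [hE, ← Real.exp_add]; ring_nf
  have hratio1 : ∀ a : A, Ph a ≤ E * Ps a := by
    intro a
    rw [hPh a, hPsdef]
    rw [div_le_iff₀ hShpos]
    have h1 := hub a
    have h2 := hSlb
    have hx := Real.exp_pos (ε / τ)
    have hy := Real.exp_pos (Qs a / τ)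
    have hz := Real.exp_pos (Qh a / τ)
    have key : Real.exp (Qh a / τ) * S ≤ (Real.exp (ε / τ) * Real.exp (Qs a / τ)) * (Real.exp (ε / τ) * Sh) :=
      mul_le_mul h1 h2 hSpos.le (by positivity)
    have : E * (Real.exp (Qs a / τ) / S) * Sh = E * Real.exp (Qs a / τ) * Sh / S := by ring
    rw [this, le_div_iff₀ hSpos, hEsq]
    nlinarith
  have hratio2 : ∀ a : A, Ps a ≤ E * Ph a := by
    intro a
    rw [hPh a, hPsdef]
    have h1 := hlb a
    have h2 := hSub
    have key : Real.exp (Qs a / τ) * Sh ≤ (Real.exp (ε / τ) * Real.exp (Qh a / τ)) * (Real.exp (ε / τ) * S) :=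
      mul_le_mul h1 h2 hShpos.le (by positivity)
    rw [div_le_iff₀ hSpos]
    have : E * (Real.exp (Qh a / τ) / Sh) * S = E * Real.exp (Qh a / τ) * S / Sh := by ring
    rw [this, le_div_iff₀ hShpos, hEsq]
    nlinarith
  have hPhsum : ∑ a, Ph a = 1 := by
    have : ∑ a, Ph a = ∑ a, Real.exp (Qh a / τ) / Sh := by
      apply Finset.sum_congr rfl; intro a _; rw [hPh a]
    rw [this, ← Finset.sum_div, ← hSh, div_self hShpos.ne']
  have hPssum : ∑ a, Ps a = 1 := by
    rw [hPsdef, ← Finset.sum_div, ← hS, div_self hSpos.ne']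
  -- Step A
  have stepA : ∑ a, |Ph a - Ps a| ≤ 2 * K := by
    calc ∑ a, |Ph a - Ps a| ≤ ∑ a, (Ph a + Ps a) * K := by
          apply Finset.sum_le_sum
          intro a _
          exact tanh_aux _ _ _ hE1 (hratio1 a) (hratio2 a)
      _ = (∑ a, Ph a + ∑ a, Ps a) * K := by
          rw [← Finset.sum_mul, Finset.sum_add_distrib]
      _ = 2 * K := by rw [hPhsum, hPssum]; ring
  -- Step B setup
  have hM : ∀ a ∈ Astar, Qs a = Finset.univ.sup' Finset.univ_nonempty Qs := by
    intro a ha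
    apply le_antisymm (Finset.le_sup' Qs (Finset.mem_univ a))
    exact Finset.sup'_le _ _ fun b _ => (hAstar a).1 ha b
  have hAne : Astar.Nonempty := by
    obtain ⟨a, _, ha⟩ := Finset.exists_max_image Finset.univ Qs Finset.univ_nonempty
    exact ⟨a, (hAstar a).2 fun b => ha b (Finset.mem_univ b)⟩
  set M : ℝ := Finset.univ.sup' Finset.univ_nonempty Qs with hMdef
  have hk1 : 1 ≤ Astar.card := Finset.card_pos.2 hAne
  have hk1' : (1:ℝ) ≤ (Astar.card : ℝ) := by exact_mod_cast hk1
  have hSk : (Astar.card : ℝ) * Real.exp (M / τ) ≤ S := by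
    have h1 : ∑ a ∈ Astar, Real.exp (Qs a / τ) ≤ S :=
      Finset.sum_le_sum_of_subset_of_nonneg (Finset.subset_univ _)
        (fun a _ _ => (Real.exp_pos _).le)
    have h2 : ∑ a ∈ Astar, Real.exp (Qs a / τ) = (Astar.card : ℝ) * Real.exp (M / τ) := by
      rw [Finset.sum_congr rfl (fun a ha => by rw [hM a ha]), Finset.sum_const, nsmul_eq_mul]
    linarith [h2 ▸ h1]
  have hSexp : Real.exp (M / τ) ≤ S := by nlinarith [Real.exp_pos (M / τ)]
  have hPsC : ∀ a ∈ Astarᶜ, Ps a ≤ Real.exp (-Δ / τ) := by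
    intro a ha
    have hQa : Qs a ≤ M - Δ := by
      have := Finset.le_sup' Qs ha
      rw [hΔ]; linarith [this]
    have h1 : Real.exp (Qs a / τ) ≤ Real.exp ((M - Δ) / τ) :=
      Real.exp_le_exp.2 (div_le_div_of_nonneg_right hQa hτ.le)
    calc Ps a ≤ Real.exp ((M - Δ) / τ) / S :=
          div_le_div_of_nonneg_right h1 hSpos.le
      _ ≤ Real.exp ((M - Δ) / τ) / Real.exp (M / τ) := by
          apply div_le_div_of_nonneg_left (Real.exp_pos _).le (Real.exp_pos _) hSexp
      _ = Real.exp (-Δ / τ) := by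
          rw [← Real.exp_sub]
          congr 1; field_simp; ring
  have hPsA : ∀ a ∈ Astar, Ps a ≤ 1 / (Astar.card : ℝ) := by
    intro a ha
    have : Ps a = Real.exp (M / τ) / S := by rw [hPsdef]; simp [hM a ha]
    rw [this, div_le_div_iff₀ hSpos (by linarith)]
    nlinarith [Real.exp_pos (M / τ)]
  set t : ℝ := ∑ a ∈ Astarᶜ, Ps a with ht
  have hsplitPs : ∑ a ∈ Astar, Ps a + t = 1 := by
    rw [ht, Finset.sum_add_sum_compl, hPssum]
  have hsumA : ∑ a ∈ Astar, |Ps a - πs a| = t := by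
    have h1 : ∀ a ∈ Astar, |Ps a - πs a| = 1 / (Astar.card : ℝ) - Ps a := by
      intro a ha
      rw [hπ a, if_pos ha, abs_sub_comm, abs_of_nonneg (by linarith [hPsA a ha])]
    rw [Finset.sum_congr rfl h1, Finset.sum_sub_distrib, Finset.sum_const, nsmul_eq_mul,
      mul_one_div, div_self (by positivity : (Astar.card : ℝ) ≠ 0)]
    linarith
  have hsumC : ∑ a ∈ Astarᶜ, |Ps a - πs a| = t := by
    apply Finset.sum_congr rfl
    intro a ha
    rw [hπ a, if_neg (Finset.mem_compl.1 ha), sub_zero,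
      abs_of_nonneg (hPs0 a)]
  have hcardC : (Astarᶜ.card : ℝ) ≤ c - 1 := by
    have h1 : Astar.card + Astarᶜ.card = Fintype.card A := Finset.card_add_card_compl _
    have : (Astar.card : ℝ) + (Astarᶜ.card : ℝ) = c := by rw [hc]; exact_mod_cast h1
    linarith
  have hExp0 : (0:ℝ) ≤ Real.exp (-Δ / τ) := (Real.exp_pos _).le
  have htle : t ≤ (c - 1) * Real.exp (-Δ / τ) := by
    calc t ≤ ∑ _a ∈ Astarᶜ, Real.exp (-Δ / τ) := Finset.sum_le_sum hPsC
      _ = (Astarᶜ.card : ℝ) * Real.exp (-Δ / τ) := by rw [Finset.sum_const, nsmul_eq_mul]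
      _ ≤ (c - 1) * Real.exp (-Δ / τ) := mul_le_mul_of_nonneg_right hcardC hExp0
  have stepB : ∑ a, |Ps a - πs a| ≤ 2 * ((c - 1) * Real.exp (-Δ / τ)) := by
    rw [← Finset.sum_add_sum_compl Astar, hsumA, hsumC]
    linarith
  -- card A ≥ 2
  have hc2 : (2:ℝ) ≤ c := by
    have h1 : Astar.card + Astarᶜ.card = Fintype.card A := Finset.card_add_card_compl _
    have hk2 : 1 ≤ Astarᶜ.card := Finset.card_pos.2 hne
    have h2 : 2 ≤ Fintype.card A := by omega
    rw [hc]; exact_mod_cast h2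
  -- combine
  have htri : ∑ a, |Ph a - πs a| ≤ ∑ a, |Ph a - Ps a| + ∑ a, |Ps a - πs a| := by
    rw [← Finset.sum_add_distrib]
    apply Finset.sum_le_sum
    intro a _
    exact abs_sub_le _ _ _
  have hKle : K ≤ (c ^ 2 / 2) * K := by
    have h1 : (1:ℝ) ≤ c ^ 2 / 2 := by nlinarith [hc2]
    calc K = 1 * K := (one_mul K).symm
      _ ≤ (c ^ 2 / 2) * K := mul_le_mul_of_nonneg_right h1 hK0
  calc (1 / 2) * ∑ a, |Ph a - πs a|
      ≤ (1 / 2) * (2 * K + 2 * ((c - 1) * Real.exp (-Δ / τ))) := by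
        have := htri.trans (by linarith [stepA, stepB] : ∑ a, |Ph a - Ps a| + ∑ a, |Ps a - πs a| ≤ 2 * K + 2 * ((c - 1) * Real.exp (-Δ / τ)))
        linarith
    _ = K + (c - 1) * Real.exp (-Δ / τ) := by ring
    _ ≤ (c ^ 2 / 2) * K + (c - 1) * Real.exp (-Δ / τ) := by linarith
end

section
/- In the transition-kernel setting, let μ* be a probability distribution on A with drift D(μ*) ≤ −α for some α > 0. Let (Ω, F, ℙ) be a probability space and ω ↦ μ_ω a measurable map from Ω to probability distributions on A such that ℙ(‖μ_ω − μ*‖_TV ≤ κ) ≥ 1 − δ, where κ ≥ 0 and δ ∈ [0,1]. Then the expected drift satisfies E_ω[D(μ_ω)] ≤ 4ν((1 − δ)κ + δ) − α. -/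
open MeasureTheory Real

set_option maxHeartbeats 1000000

/-- Expected drift bound under a random policy that is `κ`-close in total
variation to a drift-`(−α)` policy `μ*` with probability at least `1 − δ`:
`E_ω[D(μ_ω)] ≤ 4ν((1 − δ)κ + δ) − α`. -/
theorem stmt_14 {S A : Type*} [Countable S] [Fintype A] [Nonempty A]
    (p : S → A → S → ℝ) (s : S)
    (hp0 : ∀ a s', 0 ≤ p s a s')
    (hp1 : ∀ a, HasSum (fun s' => p s a s') 1)
    (L : S → ℝ) (hL0 : ∀ s', 0 ≤ L s')
    (ν : ℝ) (hν : 0 < ν)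
    (hinc : ∀ a s', 0 < p s a s' → |L s' - L s| ≤ ν)
    (μs : A → ℝ)
    (hμs0 : ∀ a, 0 ≤ μs a) (hμs1 : ∑ a, μs a = 1)
    (α : ℝ) (hα : 0 < α)
    (hdrift : (∑ a, μs a * (∑' s', p s a s' * L s')) - L s ≤ -α)
    {Ω : Type*} {mΩ : MeasurableSpace Ω} (ℙ : Measure Ω) [IsProbabilityMeasure ℙ]
    (pol : Ω → A → ℝ)
    (hπmeas : ∀ a, Measurable fun ω => pol ω a)
    (hπ0 : ∀ ω a, 0 ≤ pol ω a) (hπ1 : ∀ ω, ∑ a, pol ω a = 1)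
    (κ δ : ℝ) (hκ : 0 ≤ κ) (hδ0 : 0 ≤ δ) (hδ1 : δ ≤ 1)
    (hTV : 1 - δ ≤ (ℙ {ω | (1 / 2) * ∑ a, |pol ω a - μs a| ≤ κ}).toReal) :
    ∫ ω, ((∑ a, pol ω a * (∑' s', p s a s' * L s')) - L s) ∂ℙ ≤
      4 * ν * ((1 - δ) * κ + δ) - α := by
  classical
  set f : A → ℝ := fun a => ∑' s', p s a s' * L s' with hf_def
  -- |f a - L s| ≤ ν
  have hfb : ∀ a, |f a - L s| ≤ ν := by
    intro a
    have hsum : Summable (fun s' => p s a s') := (hp1 a).summable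
    have h1 : ∑' s', p s a s' = 1 := (hp1 a).tsum_eq
    have hbound : ∀ s', |p s a s' * (L s' - L s)| ≤ p s a s' * ν := by
      intro s'
      rcases eq_or_lt_of_le (hp0 a s') with h | h
      · simp [← h, mul_nonneg (hp0 a s') hν.le]
      · rw [abs_mul, abs_of_pos h]
        exact mul_le_mul_of_nonneg_left (hinc a s' h) h.le
    have hsumν : Summable (fun s' => p s a s' * ν) := hsum.mul_right ν
    have habs : Summable (fun s' => |p s a s' * (L s' - L s)|) :=
      Summable.of_nonneg_of_le (fun s' => abs_nonneg _) hbound hsumν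
    have hsum2 : Summable (fun s' => p s a s' * (L s' - L s)) := habs.of_abs
    have hsum3 : Summable (fun s' => p s a s' * L s) := hsum.mul_right _
    have hfL : f a = (∑' s', p s a s' * (L s' - L s)) + L s := by
      have he : (fun s' => p s a s' * L s') =
          fun s' => p s a s' * (L s' - L s) + p s a s' * L s := by
        funext s'; ring
      rw [hf_def]
      simp only [he]
      rw [Summable.tsum_add hsum2 hsum3, tsum_mul_right, h1, one_mul]
    have h2 : |∑' s', p s a s' * (L s' - L s)| ≤ ν := by
      calc |∑' s', p s a s' * (L s' - L s)| ≤ ∑' s', |p s a s' * (L s' - L s)| := by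
            have := norm_tsum_le_tsum_norm (f := fun s' => p s a s' * (L s' - L s))
              (by simpa only [Real.norm_eq_abs] using habs)
            simpa only [Real.norm_eq_abs] using this
        _ ≤ ∑' s', p s a s' * ν := Summable.tsum_le_tsum hbound habs hsumν
        _ = ν := by rw [tsum_mul_right, h1, one_mul]
    rw [hfL]
    simpa using h2
  -- pointwise drift bound
  have key : ∀ (μ : A → ℝ), (∀ a, 0 ≤ μ a) → ∑ a, μ a = 1 →
      (∑ a, μ a * f a) - L s ≤ -α + ν * ∑ a, |μ a - μs a| := by
    intro μ h0 h1
    have hsplit : (∑ a, μ a * f a) - L s =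
        (∑ a, (μ a - μs a) * (f a - L s)) + ((∑ a, μs a * f a) - L s) := by
      have : ∑ a, (μ a - μs a) * (f a - L s) =
          (∑ a, μ a * f a) - (∑ a, μs a * f a) - (∑ a, μ a) * L s + (∑ a, μs a) * L s := by
        simp only [Finset.sum_mul, ← Finset.sum_sub_distrib, ← Finset.sum_add_distrib]
        apply Finset.sum_congr rfl
        intro a _; ring
      rw [this, h1, hμs1]; ring
    rw [hsplit]
    have hb : ∑ a, (μ a - μs a) * (f a - L s) ≤ ∑ a, |μ a - μs a| * ν := by
      apply Finset.sum_le_sum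
      intro a _
      calc (μ a - μs a) * (f a - L s) ≤ |(μ a - μs a) * (f a - L s)| := le_abs_self _
        _ = |μ a - μs a| * |f a - L s| := abs_mul _ _
        _ ≤ |μ a - μs a| * ν := mul_le_mul_of_nonneg_left (hfb a) (abs_nonneg _)
    have : ∑ a, |μ a - μs a| * ν = ν * ∑ a, |μ a - μs a| := by
      rw [Finset.mul_sum]; apply Finset.sum_congr rfl; intro a _; ring
    rw [this] at hb
    linarith [hdrift, hb]
  -- TV ≤ 1, i.e. sum of abs ≤ 2
  have habs2 : ∀ ω, ∑ a, |pol ω a - μs a| ≤ 2 := by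
    intro ω
    calc ∑ a, |pol ω a - μs a| ≤ ∑ a, (pol ω a + μs a) := by
          apply Finset.sum_le_sum
          intro a _
          calc |pol ω a - μs a| ≤ |pol ω a| + |μs a| := abs_sub _ _
            _ = pol ω a + μs a := by rw [abs_of_nonneg (hπ0 ω a), abs_of_nonneg (hμs0 a)]
      _ = 2 := by rw [Finset.sum_add_distrib, hπ1 ω, hμs1]; norm_num
  -- the good event
  set E : Set Ω := {ω | (1 / 2) * ∑ a, |pol ω a - μs a| ≤ κ} with hE_def
  have hEmeas : MeasurableSet E := by
    apply measurableSet_le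
    · exact (Finset.measurable_sum Finset.univ
        (fun a _ => ((hπmeas a).sub measurable_const).abs)).const_mul _
    · exact measurable_const
  set m : ℝ := min κ 1 with hm_def
  -- pointwise bound by the indicator function
  set b : Ω → ℝ := fun ω => (-α + 2 * ν) + E.indicator (fun _ => 2 * ν * (m - 1)) ω with hb_def
  have hgb : ∀ ω, (∑ a, pol ω a * f a) - L s ≤ b ω := by
    intro ω
    have hk := key (pol ω) (hπ0 ω) (hπ1 ω)
    by_cases hω : ω ∈ E
    · have h1 : ∑ a, |pol ω a - μs a| ≤ 2 * κ := by
        have := hω; rw [hE_def] at this; simp only [Set.mem_setOf_eq] at this; linarith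
      have h3 : ν * ∑ a, |pol ω a - μs a| ≤ 2 * ν * m := by
        rcases le_total κ 1 with h | h
        · have hmκ : m = κ := min_eq_left h
          rw [hmκ]
          nlinarith [hν.le]
        · have hm1 : m = (1:ℝ) := min_eq_right h
          rw [hm1]
          nlinarith [habs2 ω, hν.le]
      rw [hb_def]
      simp only [Set.indicator_of_mem hω]
      linarith
    · rw [hb_def]
      simp only [Set.indicator_of_notMem hω]
      have := habs2 ω
      nlinarith [hν.le]
  -- integrability of the drift
  have hpol_le : ∀ ω a, pol ω a ≤ 1 := by
    intro ω a
    have := Finset.single_le_sum (f := fun a => pol ω a) (fun a _ => hπ0 ω a)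
      (Finset.mem_univ a)
    rw [hπ1 ω] at this; exact this
  have hint_pol : ∀ a, Integrable (fun ω => pol ω a) ℙ := by
    intro a
    refine (integrable_const (1:ℝ)).mono' (hπmeas a).aestronglyMeasurable ?_
    filter_upwards with ω
    rw [Real.norm_eq_abs, abs_of_nonneg (hπ0 ω a)]
    exact hpol_le ω a
  have hint_g : Integrable (fun ω => (∑ a, pol ω a * f a) - L s) ℙ := by
    apply Integrable.sub _ (integrable_const _)
    apply integrable_finset_sum
    intro a _
    exact (hint_pol a).mul_const _
  have hint_b : Integrable b ℙ := by
    rw [hb_def]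
    exact (integrable_const _).add
      ((integrable_indicator_iff hEmeas).2 (integrableOn_const (measure_ne_top _ _)))
  -- integrate
  have hIb : ∫ ω, b ω ∂ℙ = (-α + 2 * ν) + 2 * ν * (m - 1) * (ℙ E).toReal := by
    rw [hb_def]
    rw [integral_add (integrable_const _)
      ((integrable_indicator_iff hEmeas).2 (integrableOn_const (measure_ne_top _ _)))]
    rw [integral_const, integral_indicator_const _ hEmeas]
    simp [measure_univ, smul_eq_mul, mul_comm, measureReal_def]
  have hle : ∫ ω, ((∑ a, pol ω a * f a) - L s) ∂ℙ ≤ ∫ ω, b ω ∂ℙ :=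
    integral_mono hint_g hint_b hgb
  rw [hIb] at hle
  refine hle.trans ?_
  -- final arithmetic
  set q : ℝ := (ℙ E).toReal with hq_def
  have hq1 : q ≤ 1 := by
    rw [hq_def]
    have := prob_le_one (μ := ℙ) (s := E)
    simpa using ENNReal.toReal_le_of_le_ofReal (by norm_num) (by simpa using this)
  have hq0 : 1 - δ ≤ q := hTV
  have hqnn : 0 ≤ q := ENNReal.toReal_nonneg
  rcases le_total κ 1 with h | h
  · have hmκ : m = κ := min_eq_left h
    rw [hmκ]
    nlinarith [mul_nonneg (mul_nonneg hν.le (sub_nonneg.2 h)) (sub_nonneg.2 (by linarith : 1 - δ ≤ q)),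
      mul_nonneg hν.le (mul_nonneg (sub_nonneg.2 hδ1) hκ), mul_nonneg hν.le hδ0]
  · have hm1 : m = (1:ℝ) := min_eq_right h
    rw [hm1]
    nlinarith [mul_nonneg hν.le (mul_nonneg (sub_nonneg.2 hδ1) (sub_nonneg.2 h)),
      mul_nonneg hν.le hδ0, hν.le]
end
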